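/- arXiv:2108.01584 — 5 statements merged into one kernel-verified Lean document; each statement's English description precedes it below -/
import Mathlib

section
/- (Johnson–Lindenstrauss Theorem.) Let X be a set of n points (n ≥ 2) in the Euclidean space ℝ^d and let ε ∈ (0,1). If k is a natural number with k ≥ 4·(ε²/2 − ε³/3)⁻¹·ln n, then there exists a map F : ℝ^d → ℝ^k such that for all u, v ∈ X: (1−ε)‖u−v‖² ≤ ‖F(u)−F(v)‖² ≤ (1+ε)‖u−v‖². -/
open MeasureTheory ProbabilityTheory Real ENNReal

private lemma jl_hd1 (t : ℝ) (h1 : (0:ℝ) < 1 + t) :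
    HasDerivAt (fun t : ℝ => t - t^2/2 + t^3/3 - Real.log (1+t)) (t^3/(1+t)) t := by
  have hlog : HasDerivAt (fun t : ℝ => Real.log (1+t)) (1/(1+t)) t := by
    have := (Real.hasDerivAt_log h1.ne').comp t ((hasDerivAt_id t).const_add 1)
    simpa [Function.comp_def] using this
  have hpoly : HasDerivAt (fun t : ℝ => t - t^2/2 + t^3/3) (1 - 2*t/2 + 3*t^2/3) t := by
    have h := ((hasDerivAt_id t).sub (((hasDerivAt_pow 2 t).div_const 2))).add
      ((hasDerivAt_pow 3 t).div_const 3)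
    norm_num at h
    refine h.congr_deriv ?_
    ring
  have := hpoly.sub hlog
  refine this.congr_deriv ?_
  field_simp
  ring

private lemma jl_hd2 (t : ℝ) (h1 : (0:ℝ) < 1 + t) :
    HasDerivAt (fun t : ℝ => Real.log (1+t) - t + t^2/2) (t^2/(1+t)) t := by
  have hlog : HasDerivAt (fun t : ℝ => Real.log (1+t)) (1/(1+t)) t := by
    have := (Real.hasDerivAt_log h1.ne').comp t ((hasDerivAt_id t).const_add 1)
    simpa [Function.comp_def] using this
  have h := (hlog.sub (hasDerivAt_id t)).add ((hasDerivAt_pow 2 t).div_const 2)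
  norm_num at h
  refine h.congr_deriv ?_
  field_simp
  ring

lemma jl_log_le {x : ℝ} (hx : 0 ≤ x) : Real.log (1 + x) ≤ x - x^2/2 + x^3/3 := by
  have pos : ∀ t ∈ Set.Icc (0:ℝ) x, (0:ℝ) < 1 + t := fun t ht => by nlinarith [ht.1]
  have key : ∀ y ∈ Set.Icc (0:ℝ) x, ∀ z ∈ Set.Icc (0:ℝ) x, y ≤ z →
      (fun t => t - t^2/2 + t^3/3 - Real.log (1+t)) y ≤
      (fun t => t - t^2/2 + t^3/3 - Real.log (1+t)) z := by
    apply monotoneOn_of_deriv_nonneg (convex_Icc 0 x)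
    · exact fun t ht => ((jl_hd1 t (pos t ht)).continuousAt.continuousWithinAt)
    · intro t ht
      rw [interior_Icc] at ht
      exact (jl_hd1 t (pos t ⟨ht.1.le, ht.2.le⟩)).differentiableAt.differentiableWithinAt
    · intro t ht
      rw [interior_Icc] at ht
      rw [(jl_hd1 t (pos t ⟨ht.1.le, ht.2.le⟩)).deriv]
      have h2 := ht.1
      have := pos t ⟨ht.1.le, ht.2.le⟩
      positivity
  have h := key 0 ⟨le_refl 0, hx⟩ x ⟨hx, le_refl x⟩ hx
  simp at h
  linarith

lemma jl_log_ge {x : ℝ} (hx : 0 ≤ x) : x - x^2/2 ≤ Real.log (1 + x) := by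
  have pos : ∀ t ∈ Set.Icc (0:ℝ) x, (0:ℝ) < 1 + t := fun t ht => by nlinarith [ht.1]
  have key : ∀ y ∈ Set.Icc (0:ℝ) x, ∀ z ∈ Set.Icc (0:ℝ) x, y ≤ z →
      (fun t => Real.log (1+t) - t + t^2/2) y ≤
      (fun t => Real.log (1+t) - t + t^2/2) z := by
    apply monotoneOn_of_deriv_nonneg (convex_Icc 0 x)
    · exact fun t ht => ((jl_hd2 t (pos t ht)).continuousAt.continuousWithinAt)
    · intro t ht
      rw [interior_Icc] at ht
      exact (jl_hd2 t (pos t ⟨ht.1.le, ht.2.le⟩)).differentiableAt.differentiableWithinAt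
    · intro t ht
      rw [interior_Icc] at ht
      rw [(jl_hd2 t (pos t ⟨ht.1.le, ht.2.le⟩)).deriv]
      have := pos t ⟨ht.1.le, ht.2.le⟩
      positivity
  have h := key 0 ⟨le_refl 0, hx⟩ x ⟨hx, le_refl x⟩ hx
  simp at h
  linarith

noncomputable def jlγ : Measure ℝ := gaussianReal 0 1

instance : IsProbabilityMeasure jlγ := by unfold jlγ; infer_instance

noncomputable def jlpdf : ℝ → ℝ≥0∞ := gaussianPDF 0 1

lemma jlγ_eq : jlγ = (volume : Measure ℝ).withDensity jlpdf :=
  gaussianReal_of_var_ne_zero 0 one_ne_zero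

lemma jlpdf_meas : Measurable jlpdf := measurable_gaussianPDF 0 1

/-- The 2D standard Gaussian as a density against Lebesgue. -/
lemma jl_gauss_prod :
    jlγ.prod jlγ = (volume : Measure (ℝ × ℝ)).withDensity
      (fun p => jlpdf p.1 * jlpdf p.2) := by
  have hsf : SigmaFinite ((volume : Measure ℝ).withDensity jlpdf) := by
    rw [← jlγ_eq]; infer_instance
  rw [jlγ_eq]
  refine Measure.prod_eq fun s t hs ht => ?_
  rw [Measure.volume_eq_prod, withDensity_apply _ (hs.prod ht),
    ← Measure.prod_restrict,
    lintegral_prod_mul jlpdf_meas.aemeasurable jlpdf_meas.aemeasurable,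
    withDensity_apply _ hs, withDensity_apply _ ht]

/-- The rotation map. -/
noncomputable def jlrotL (c s : ℝ) : (ℝ × ℝ) →ₗ[ℝ] (ℝ × ℝ) where
  toFun := fun p => (c * p.1 + s * p.2, -s * p.1 + c * p.2)
  map_add' := by intro x y; simp [Prod.ext_iff]; constructor <;> ring
  map_smul' := by intro r x; simp [Prod.ext_iff, smul_eq_mul]; constructor <;> ring

lemma jlrotL_det (c s : ℝ) : LinearMap.det (jlrotL c s) = c^2 + s^2 := by
  rw [← LinearMap.det_toMatrix (Module.Basis.finTwoProd ℝ), Matrix.det_fin_two]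
  simp [LinearMap.toMatrix_apply, jlrotL]
  ring

/-- Rotation as a measurable equiv. -/
noncomputable def jlrotE (c s : ℝ) (hcs : c^2 + s^2 = 1) : (ℝ × ℝ) ≃ᵐ (ℝ × ℝ) where
  toFun := fun p => (c * p.1 + s * p.2, -s * p.1 + c * p.2)
  invFun := fun p => (c * p.1 - s * p.2, s * p.1 + c * p.2)
  left_inv := by
    intro p; simp [Prod.ext_iff]
    constructor
    · linear_combination p.1 * hcs
    · linear_combination p.2 * hcs
  right_inv := by
    intro p; simp [Prod.ext_iff]
    constructor
    · linear_combination p.1 * hcs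
    · linear_combination p.2 * hcs
  measurable_toFun := by measurability
  measurable_invFun := by measurability

lemma jlrotE_symm_apply (c s : ℝ) (hcs : c^2 + s^2 = 1) (p : ℝ × ℝ) :
    (jlrotE c s hcs).symm p = (c * p.1 - s * p.2, s * p.1 + c * p.2) := rfl

lemma jl_map_rot_volume (c s : ℝ) (hcs : c^2 + s^2 = 1) :
    Measure.map (jlrotE c s hcs) (volume : Measure (ℝ × ℝ)) = volume := by
  have hdet : LinearMap.det (jlrotL c s) = 1 := by rw [jlrotL_det, hcs]
  have h := Measure.map_linearMap_addHaar_eq_smul_addHaar (μ := (volume : Measure (ℝ × ℝ)))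
    (f := jlrotL c s) (by rw [hdet]; norm_num)
  have hco : ⇑(jlrotE c s hcs) = ⇑(jlrotL c s) := rfl
  rw [hco, h, hdet]
  norm_num

/-- Map of a withDensity measure under a measurable equiv. -/
lemma jl_map_withDensity {α β : Type*} [MeasurableSpace α] [MeasurableSpace β]
    (e : α ≃ᵐ β) (μ : Measure α) (g : α → ℝ≥0∞) (hg : Measurable g) :
    Measure.map e (μ.withDensity g) = (Measure.map e μ).withDensity (g ∘ e.symm) := by
  ext s hs
  rw [Measure.map_apply e.measurable hs, withDensity_apply _ (e.measurable hs),
    withDensity_apply _ hs, setLIntegral_map hs (hg.comp e.symm.measurable) e.measurable]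
  simp

/-- Rotation invariance of the 2D Gaussian, projected: the key 1-step lemma. -/
lemma jl_rot_gauss (c s : ℝ) (hcs : c^2 + s^2 = 1) :
    Measure.map (fun p : ℝ × ℝ => c * p.1 + s * p.2) (jlγ.prod jlγ) = jlγ := by
  have hmeas : Measurable fun p : ℝ × ℝ => jlpdf p.1 * jlpdf p.2 :=
    (jlpdf_meas.comp measurable_fst).mul (jlpdf_meas.comp measurable_snd)
  have hinv : Measure.map (jlrotE c s hcs) (jlγ.prod jlγ) = jlγ.prod jlγ := by
    rw [jl_gauss_prod, jl_map_withDensity _ _ _ hmeas, jl_map_rot_volume]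
    congr 1
    funext p
    have key : gaussianPDFReal 0 1 (c * p.1 - s * p.2) * gaussianPDFReal 0 1 (s * p.1 + c * p.2)
        = gaussianPDFReal 0 1 p.1 * gaussianPDFReal 0 1 p.2 := by
      simp only [gaussianPDFReal]
      rw [mul_mul_mul_comm, ← Real.exp_add, mul_mul_mul_comm, ← Real.exp_add]
      congr 2
      push_cast
      ring_nf
      nlinarith [hcs, sq_nonneg p.1, sq_nonneg p.2]
    simp only [Function.comp, jlrotE_symm_apply, jlpdf, gaussianPDF]
    rw [← ENNReal.ofReal_mul (gaussianPDFReal_nonneg 0 1 _),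
      ← ENNReal.ofReal_mul (gaussianPDFReal_nonneg 0 1 _), key]
  have hfst : (fun p : ℝ × ℝ => c * p.1 + s * p.2) = Prod.fst ∘ (jlrotE c s hcs) := rfl
  rw [hfst, ← Measure.map_map measurable_fst (jlrotE c s hcs).measurable, hinv,
    Measure.map_fst_prod]
  simp

noncomputable def jlΓ (m : ℕ) : Measure (Fin m → ℝ) := Measure.pi fun _ => jlγ

instance (m : ℕ) : IsProbabilityMeasure (jlΓ m) := by unfold jlΓ; infer_instance

lemma jl_sum_meas {m : ℕ} (x : Fin m → ℝ) :
    Measurable (fun y : Fin m → ℝ => ∑ j, x j * y j) := by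
  apply Finset.measurable_sum
  intro j _
  exact (measurable_pi_apply j).const_mul _

/-- Law of `⟨x, ·⟩` under the standard Gaussian product measure, for a unit vector `x`. -/
lemma jl_map_inner : ∀ (m : ℕ) (x : Fin m → ℝ), (∑ j, (x j)^2 = 1) →
    Measure.map (fun y : Fin m → ℝ => ∑ j, x j * y j) (jlΓ m) = jlγ := by
  intro m
  induction m with
  | zero => intro x hx; simp at hx
  | succ m IH =>
    intro x hx
    set e := MeasurableEquiv.piFinSuccAbove (fun _ : Fin (m+1) => ℝ) 0 with he
    have hmp : MeasurePreserving e (jlΓ (m+1)) (jlγ.prod (jlΓ m)) :=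
      measurePreserving_piFinSuccAbove (fun _ => jlγ) 0
    have he_apply : ∀ y : Fin (m+1) → ℝ, e y = (y 0, fun j => y j.succ) := by
      intro y
      simp [he, MeasurableEquiv.piFinSuccAbove, Fin.insertNthEquiv, Fin.zero_succAbove]
      rfl
    have hx_succ : ∑ j : Fin m, (x j.succ)^2 = 1 - (x 0)^2 := by
      rw [Fin.sum_univ_succ] at hx; linarith
    by_cases h0 : ∑ j : Fin m, (x j.succ)^2 = 0
    · -- degenerate case : x = (±1, 0, ..., 0)
      have hx0 : (x 0)^2 = 1 := by rw [h0] at hx_succ; linarith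
      have hzero : ∀ j : Fin m, x j.succ = 0 := by
        intro j
        have := (Finset.sum_eq_zero_iff_of_nonneg (fun i _ => sq_nonneg (x i.succ))).mp h0 j
          (Finset.mem_univ j)
        exact pow_eq_zero_iff two_ne_zero |>.mp this
      have hfun : (fun y : Fin (m+1) → ℝ => ∑ j, x j * y j)
          = (fun t : ℝ => x 0 * t) ∘ Prod.fst ∘ e := by
        funext y
        simp [Function.comp, he_apply, Fin.sum_univ_succ, hzero]
      rw [hfun,
        ← Measure.map_map (measurable_const_mul (x 0)) (measurable_fst.comp e.measurable),
        ← Measure.map_map measurable_fst e.measurable,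
        hmp.map_eq, Measure.map_fst_prod]
      simp only [measure_univ, one_smul]
      show (gaussianReal 0 1).map (fun t => x 0 * t) = jlγ
      rw [show (fun t => x 0 * t) = (x 0 * ·) from rfl, gaussianReal_map_const_mul]
      unfold jlγ
      congr 1
      · ring
      · ext
        simp [hx0]
    · -- nondegenerate case
      set r := Real.sqrt (∑ j : Fin m, (x j.succ)^2) with hr
      have hsumnn : (0:ℝ) ≤ ∑ j : Fin m, (x j.succ)^2 :=
        Finset.sum_nonneg fun i _ => sq_nonneg _
      have hrpos : 0 < r := Real.sqrt_pos.mpr (lt_of_le_of_ne hsumnn (Ne.symm h0))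
      have hr2 : r^2 = ∑ j : Fin m, (x j.succ)^2 := Real.sq_sqrt hsumnn
      set x' : Fin m → ℝ := fun j => x j.succ / r with hx'
      have hx'1 : ∑ j, (x' j)^2 = 1 := by
        simp only [hx', div_pow]
        rw [← Finset.sum_div, ← hr2]
        field_simp
      have hIH := IH x' hx'1
      set S' : (Fin m → ℝ) → ℝ := fun y => ∑ j, x' j * y j with hS'
      have hS'meas : Measurable S' := jl_sum_meas x'
      have hmp2 : MeasurePreserving (Prod.map (fun t : ℝ => t) S')
          (jlγ.prod (jlΓ m)) (jlγ.prod jlγ) :=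
        (MeasurePreserving.id jlγ).prod ⟨hS'meas, hIH⟩
      have hfun : (fun y : Fin (m+1) → ℝ => ∑ j, x j * y j)
          = (fun p : ℝ × ℝ => x 0 * p.1 + r * p.2) ∘ (Prod.map (fun t : ℝ => t) S') ∘ e := by
        funext y
        rw [Function.comp_apply, Function.comp_apply, he_apply, Prod.map_apply]
        simp only [hS', hx']
        rw [Fin.sum_univ_succ, Finset.mul_sum]
        congr 1
        refine Finset.sum_congr rfl fun j _ => ?_
        field_simp
      have hrot : (x 0)^2 + r^2 = 1 := by rw [hr2]; linarith
      rw [hfun,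
        ← Measure.map_map (by measurability) ((hmp2.measurable).comp e.measurable),
        ← Measure.map_map hmp2.measurable e.measurable,
        hmp.map_eq, hmp2.map_eq]
      exact jl_rot_gauss (x 0) r hrot

lemma jl_lintegral_pi : ∀ (m : ℕ) (f : ℝ → ℝ≥0∞), Measurable f →
    ∫⁻ y, ∏ i, f (y i) ∂(jlΓ m) = (∫⁻ t, f t ∂jlγ)^m := by
  intro m
  induction m with
  | zero =>
    intro f hf
    simp [jlΓ, lintegral_const]
  | succ m IH =>
    intro f hf
    set e := MeasurableEquiv.piFinSuccAbove (fun _ : Fin (m+1) => ℝ) 0 with he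
    have hmp : MeasurePreserving e (jlΓ (m+1)) (jlγ.prod (jlΓ m)) :=
      measurePreserving_piFinSuccAbove (fun _ => jlγ) 0
    have hF : Measurable fun y : Fin (m+1) → ℝ => ∏ i, f (y i) :=
      Finset.measurable_prod _ fun i _ => hf.comp (measurable_pi_apply i)
    have hcomp : ∀ y : Fin (m+1) → ℝ,
        (∏ i, f (y i)) = f ((e y).1) * ∏ j : Fin m, f ((e y).2 j) := by
      intro y
      have : e y = (y 0, fun j => y j.succ) := by
        simp [he, MeasurableEquiv.piFinSuccAbove, Fin.insertNthEquiv, Fin.zero_succAbove]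
        rfl
      rw [this, Fin.prod_univ_succ]
    calc ∫⁻ y, ∏ i, f (y i) ∂(jlΓ (m+1))
        = ∫⁻ y, (fun p : ℝ × (Fin m → ℝ) => f p.1 * ∏ j, f (p.2 j)) (e y) ∂(jlΓ (m+1)) := by
          congr 1; funext y; exact hcomp y
      _ = ∫⁻ p, f p.1 * ∏ j, f (p.2 j) ∂(jlγ.prod (jlΓ m)) := by
          rw [← hmp.map_eq, lintegral_map_equiv]
      _ = (∫⁻ t, f t ∂jlγ) * ∫⁻ z, ∏ j, f (z j) ∂(jlΓ m) :=
          lintegral_prod_mul hf.aemeasurable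
            (Finset.measurable_prod _ fun j _ => hf.comp (measurable_pi_apply j)).aemeasurable
      _ = (∫⁻ t, f t ∂jlγ)^(m+1) := by rw [IH f hf]; ring

lemma jl_mgf (s : ℝ) (hs : s < 1/2) :
    ∫⁻ t, ENNReal.ofReal (Real.exp (s * t^2)) ∂jlγ
      = ENNReal.ofReal (1 / Real.sqrt (1 - 2*s)) := by
  have hb : (0:ℝ) < 1/2 - s := by linarith
  rw [jlγ_eq, lintegral_withDensity_eq_lintegral_mul _ jlpdf_meas (by measurability)]
  have hpt : (fun t => (jlpdf * fun t => ENNReal.ofReal (Real.exp (s * t^2))) t)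
      = fun t => ENNReal.ofReal ((Real.sqrt (2*Real.pi))⁻¹ * Real.exp (-(1/2 - s) * t^2)) := by
    funext t
    simp only [Pi.mul_apply, jlpdf, gaussianPDF]
    rw [← ENNReal.ofReal_mul (gaussianPDFReal_nonneg 0 1 t)]
    congr 1
    simp only [gaussianPDFReal, mul_one, sub_zero]
    rw [mul_assoc, ← Real.exp_add]
    congr 2
    · norm_num
    · push_cast
      ring
  rw [hpt, ← ofReal_integral_eq_lintegral_ofReal]
  · rw [MeasureTheory.integral_const_mul, integral_gaussian]
    congr 1
    rw [show (1:ℝ) - 2*s = 2*(1/2 - s) by ring,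
      ← Real.sqrt_inv (2*Real.pi), ← Real.sqrt_mul (by positivity : (0:ℝ) ≤ (2*Real.pi)⁻¹)]
    have hπ := Real.pi_pos
    rw [_root_.eq_div_iff (by positivity), ← Real.sqrt_mul (by positivity)]
    rw [show (2 * Real.pi)⁻¹ * (Real.pi / (1/2 - s)) * (2 * (1/2 - s)) = 1 by
      have h12 : (1:ℝ) - 2*s ≠ 0 := by linarith
      field_simp
      try ring
      try tauto]
    exact Real.sqrt_one
  · exact ((integrable_exp_neg_mul_sq hb).const_mul _)
  · filter_upwards with t
    positivity

lemma jl_sumsq_meas (k : ℕ) : Measurable (fun y : Fin k → ℝ => ∑ i, (y i)^2) :=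
  Finset.measurable_sum _ fun i _ => (measurable_pi_apply i).pow_const 2

lemma jl_chernoff (k : ℕ) (s b : ℝ) (hs : s < 1/2) :
    jlΓ k {y | Real.exp b ≤ Real.exp (s * ∑ i, (y i)^2)}
      ≤ ENNReal.ofReal ((1 / Real.sqrt (1 - 2*s))^k * Real.exp (-b)) := by
  set f : (Fin k → ℝ) → ℝ≥0∞ := fun y => ENNReal.ofReal (Real.exp (s * ∑ i, (y i)^2)) with hf
  have hfm : Measurable f :=
    ENNReal.measurable_ofReal.comp (Real.measurable_exp.comp ((jl_sumsq_meas k).const_mul s))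
  have hint : ∫⁻ y, f y ∂(jlΓ k) = (ENNReal.ofReal (1 / Real.sqrt (1 - 2*s)))^k := by
    have hfy : ∀ y : Fin k → ℝ, f y = ∏ i, ENNReal.ofReal (Real.exp (s * (y i)^2)) := by
      intro y
      show ENNReal.ofReal (Real.exp (s * ∑ i, (y i)^2)) = _
      rw [Finset.mul_sum, Real.exp_sum]
      exact ENNReal.ofReal_prod_of_nonneg fun i _ => (Real.exp_pos _).le
    calc ∫⁻ y, f y ∂(jlΓ k)
        = ∫⁻ y, ∏ i, (fun t => ENNReal.ofReal (Real.exp (s * t^2))) (y i) ∂(jlΓ k) := by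
          congr 1; funext y; exact hfy y
      _ = (∫⁻ t, ENNReal.ofReal (Real.exp (s * t^2)) ∂jlγ)^k :=
          jl_lintegral_pi k _ (ENNReal.measurable_ofReal.comp
            (Real.measurable_exp.comp ((measurable_id.pow_const 2).const_mul s)))
      _ = _ := by rw [jl_mgf s hs]
  have hset : {y : Fin k → ℝ | Real.exp b ≤ Real.exp (s * ∑ i, (y i)^2)}
      = {y | ENNReal.ofReal (Real.exp b) ≤ f y} := by
    ext y
    simp only [Set.mem_setOf_eq, hf]
    rw [ENNReal.ofReal_le_ofReal_iff (Real.exp_pos _).le]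
  have hmarkov := mul_meas_ge_le_lintegral₀ (μ := jlΓ k) hfm.aemeasurable
    (ENNReal.ofReal (Real.exp b))
  rw [hint] at hmarkov
  rw [hset]
  have hb0 : ENNReal.ofReal (Real.exp b) ≠ 0 := by
    simp [ENNReal.ofReal_eq_zero, not_le, Real.exp_pos]
  have hbt : ENNReal.ofReal (Real.exp b) ≠ ⊤ := ENNReal.ofReal_ne_top
  rw [← ENNReal.mul_le_mul_iff_left hb0 hbt]
  calc jlΓ k {y | ENNReal.ofReal (Real.exp b) ≤ f y} * ENNReal.ofReal (Real.exp b)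
      = ENNReal.ofReal (Real.exp b) * jlΓ k {y | ENNReal.ofReal (Real.exp b) ≤ f y} :=
        mul_comm _ _
    _ ≤ (ENNReal.ofReal (1 / Real.sqrt (1 - 2*s)))^k := hmarkov
    _ = ENNReal.ofReal ((1 / Real.sqrt (1 - 2*s))^k * Real.exp (-b))
          * ENNReal.ofReal (Real.exp b) := by
        rw [← ENNReal.ofReal_mul (by positivity), ← ENNReal.ofReal_pow (by positivity)]
        congr 1
        rw [Real.exp_neg, mul_assoc, inv_mul_cancel₀ (Real.exp_ne_zero b), mul_one]

lemma jl_exp_pow_sqrt {ε : ℝ} (hε : 0 < ε) (k : ℕ) :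
    (Real.sqrt (1+ε))^k = Real.exp (k * (Real.log (1+ε)/2)) := by
  rw [← Real.log_sqrt (by linarith), Real.exp_nat_mul,
    Real.exp_log (by positivity : (0:ℝ) < Real.sqrt (1+ε))]

lemma jl_tail_up (k : ℕ) (ε : ℝ) (hε0 : 0 < ε) (hε1 : ε < 1) :
    jlΓ k {y | (1+ε) * k ≤ ∑ i, (y i)^2}
      ≤ ENNReal.ofReal (Real.exp (-(ε^2/2 - ε^3/3) * k / 2)) := by
  set s : ℝ := ε/(2*(1+ε)) with hsdef
  have hε1' : (0:ℝ) < 1 + ε := by linarith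
  have hspos : 0 < s := by positivity
  have hs : s < 1/2 := by
    rw [hsdef, div_lt_div_iff₀ (by positivity) (by norm_num)]
    linarith
  have hsub : {y : Fin k → ℝ | (1+ε) * k ≤ ∑ i, (y i)^2}
      ⊆ {y | Real.exp (s * ((1+ε)*k)) ≤ Real.exp (s * ∑ i, (y i)^2)} := by
    intro y hy
    simp only [Set.mem_setOf_eq] at hy ⊢
    exact Real.exp_le_exp.mpr (mul_le_mul_of_nonneg_left hy hspos.le)
  refine le_trans (measure_mono hsub) (le_trans (jl_chernoff k s _ hs) ?_)
  apply ENNReal.ofReal_le_ofReal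
  have h1 : 1 - 2*s = (1+ε)⁻¹ := by
    rw [hsdef]; field_simp; ring
  have h2 : 1 / Real.sqrt (1 - 2*s) = Real.sqrt (1+ε) := by
    rw [h1, Real.sqrt_inv, one_div, inv_inv]
  have h3 : s * ((1+ε) * k) = ε * k / 2 := by
    rw [hsdef]; field_simp
  rw [h2, h3, jl_exp_pow_sqrt hε0, ← Real.exp_add, Real.exp_le_exp]
  have hlog := jl_log_le hε0.le
  have hk : (0:ℝ) ≤ (k:ℝ)/2 := by positivity
  nlinarith [mul_le_mul_of_nonneg_right hlog hk]

lemma jl_tail_lo (k : ℕ) (ε : ℝ) (hε0 : 0 < ε) (hε1 : ε < 1) :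
    jlΓ k {y | ∑ i, (y i)^2 ≤ (1-ε) * k}
      ≤ ENNReal.ofReal (Real.exp (-(ε^2/2 - ε^3/3) * k / 2)) := by
  set s : ℝ := -(ε/2) with hsdef
  have hε1' : (0:ℝ) < 1 + ε := by linarith
  have hs : s < 1/2 := by rw [hsdef]; nlinarith
  have hsub : {y : Fin k → ℝ | ∑ i, (y i)^2 ≤ (1-ε) * k}
      ⊆ {y | Real.exp (s * ((1-ε)*k)) ≤ Real.exp (s * ∑ i, (y i)^2)} := by
    intro y hy
    simp only [Set.mem_setOf_eq] at hy ⊢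
    apply Real.exp_le_exp.mpr
    rw [hsdef]
    nlinarith
  refine le_trans (measure_mono hsub) (le_trans (jl_chernoff k s _ hs) ?_)
  apply ENNReal.ofReal_le_ofReal
  have h1 : 1 - 2*s = 1 + ε := by rw [hsdef]; ring
  have h2 : 1 / Real.sqrt (1 - 2*s) = Real.exp (-(Real.log (1+ε)/2)) := by
    rw [h1, ← Real.log_sqrt (by linarith), Real.exp_neg,
      Real.exp_log (by positivity : (0:ℝ) < Real.sqrt (1+ε)), one_div]
  rw [h2, ← Real.exp_nat_mul, ← Real.exp_add, Real.exp_le_exp, hsdef]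
  have hlog := jl_log_ge hε0.le
  have hk : (0:ℝ) ≤ (k:ℝ)/2 := by positivity
  nlinarith [mul_le_mul_of_nonneg_right hlog hk,
    mul_nonneg (by positivity : (0:ℝ) ≤ ε^3) (Nat.cast_nonneg k)]

lemma jl_pairs_card (n : ℕ) :
    2 * (Finset.univ.filter (fun p : Fin n × Fin n => p.1 < p.2)).card = n*n - n := by
  classical
  set Pairs := Finset.univ.filter (fun p : Fin n × Fin n => p.1 < p.2) with hP
  set Pairs' := Finset.univ.filter (fun p : Fin n × Fin n => p.2 < p.1) with hP'
  have hswap : Pairs'.card = Pairs.card := by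
    apply Finset.card_nbij (fun p => (p.2, p.1))
    · intro p hp
      simp only [Finset.mem_coe, Finset.mem_filter, Finset.mem_univ, true_and, hP, hP'] at hp ⊢
      exact hp
    · intro p hp q hq h
      simpa [Prod.ext_iff, and_comm] using congrArg (fun r : Fin n × Fin n => (r.2, r.1)) h
    · intro p hp
      simp only [Finset.mem_coe, Finset.mem_filter, Finset.mem_univ, true_and, hP, hP',
        Set.mem_image] at hp ⊢
      exact ⟨(p.2, p.1), by simpa using hp, rfl⟩
  have hunion : (Finset.univ : Finset (Fin n)).offDiag = Pairs ∪ Pairs' := by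
    ext p
    simp only [Finset.mem_offDiag, Finset.mem_union, Finset.mem_filter, Finset.mem_univ,
      true_and, hP, hP']
    constructor
    · intro h; exact lt_or_gt_of_ne h
    · rintro (h | h)
      exacts [ne_of_lt h, ne_of_gt h]
  have hdisj : Disjoint Pairs Pairs' := by
    rw [Finset.disjoint_left]
    intro p hp hq
    simp only [hP, hP', Finset.mem_filter] at hp hq
    exact absurd (hp.2.trans hq.2) (lt_irrefl _)
  have hcard := Finset.card_union_of_disjoint hdisj
  rw [← hunion, Finset.offDiag_card, hswap] at hcard
  simp only [Finset.card_univ, Fintype.card_fin] at hcard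
  omega

lemma jl_eucl_norm_sq {d : ℕ} (w : EuclideanSpace ℝ (Fin d)) : ‖w‖^2 = ∑ j, (w j)^2 := by
  rw [EuclideanSpace.norm_eq, Real.sq_sqrt (by positivity)]
  exact Finset.sum_congr rfl fun j _ => sq_abs _

noncomputable def jlX {d : ℕ} (u v : EuclideanSpace ℝ (Fin d)) : Fin d → ℝ :=
  fun j => (u j - v j) / ‖u - v‖

noncomputable def jlS {d k : ℕ} (A : Fin k → Fin d → ℝ) (u v : EuclideanSpace ℝ (Fin d)) : ℝ :=
  ∑ i, (∑ j, jlX u v j * A i j)^2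

lemma jlX_unit {d : ℕ} {u v : EuclideanSpace ℝ (Fin d)} (huv : u ≠ v) :
    ∑ j, (jlX u v j)^2 = 1 := by
  have hnv : ‖u - v‖ ≠ 0 := by
    simp only [ne_eq, norm_eq_zero, sub_eq_zero]; exact huv
  simp only [jlX, div_pow]
  rw [← Finset.sum_div]
  have : ∑ j, (u j - v j)^2 = ‖u - v‖^2 := by
    rw [jl_eucl_norm_sq]
    exact Finset.sum_congr rfl fun j _ => by rw [PiLp.sub_apply]
  rw [this]
  field_simp

lemma jlS_symm {d k : ℕ} (A : Fin k → Fin d → ℝ) (u v : EuclideanSpace ℝ (Fin d)) :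
    jlS A v u = jlS A u v := by
  unfold jlS
  refine Finset.sum_congr rfl fun i _ => ?_
  have hx : ∀ j, jlX v u j = -(jlX u v j) := by
    intro j
    unfold jlX
    rw [norm_sub_rev v u, show v j - u j = -(u j - v j) by ring, neg_div]
  rw [show (∑ j, jlX v u j * A i j) = -(∑ j, jlX u v j * A i j) by
    rw [← Finset.sum_neg_distrib]; exact Finset.sum_congr rfl fun j _ => by rw [hx j]; ring]
  rw [neg_sq]

lemma jl_bad_prob (d k : ℕ) (ε : ℝ) (hε0 : 0 < ε) (hε1 : ε < 1)
    (u v : EuclideanSpace ℝ (Fin d)) (huv : u ≠ v) :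
    (Measure.pi fun _ : Fin k => jlΓ d)
      ({A | (1+ε) * k ≤ jlS A u v} ∪ {A | jlS A u v ≤ (1-ε) * k})
      ≤ ENNReal.ofReal (2 * Real.exp (-(ε^2/2 - ε^3/3) * k / 2)) := by
  set P : Measure (Fin k → Fin d → ℝ) := Measure.pi fun _ => jlΓ d with hP
  set Φ : (Fin k → Fin d → ℝ) → (Fin k → ℝ) := fun A i => ∑ j, jlX u v j * A i j with hΦ
  have hmp : MeasurePreserving Φ P (jlΓ k) := by
    rw [hP]
    exact MeasureTheory.measurePreserving_pi _ _
      (fun i => ⟨jl_sum_meas _, jl_map_inner d _ (jlX_unit huv)⟩)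
  have h1 : {A : Fin k → Fin d → ℝ | (1+ε) * k ≤ jlS A u v}
      = Φ ⁻¹' {y | (1+ε) * k ≤ ∑ i, (y i)^2} := rfl
  have h2 : {A : Fin k → Fin d → ℝ | jlS A u v ≤ (1-ε) * k}
      = Φ ⁻¹' {y | ∑ i, (y i)^2 ≤ (1-ε) * k} := rfl
  refine le_trans (measure_union_le _ _) ?_
  have hm1 : MeasurableSet {y : Fin k → ℝ | (1+ε) * k ≤ ∑ i, (y i)^2} :=
    measurableSet_le measurable_const (jl_sumsq_meas k)
  have hm2 : MeasurableSet {y : Fin k → ℝ | ∑ i, (y i)^2 ≤ (1-ε) * k} :=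
    measurableSet_le (jl_sumsq_meas k) measurable_const
  rw [h1, h2, hmp.measure_preimage hm1.nullMeasurableSet,
    hmp.measure_preimage hm2.nullMeasurableSet]
  rw [two_mul, ENNReal.ofReal_add (Real.exp_pos _).le (Real.exp_pos _).le]
  exact add_le_add (jl_tail_up k ε hε0 hε1) (jl_tail_lo k ε hε0 hε1)

noncomputable def jlF {d k : ℕ} (A : Fin k → Fin d → ℝ) :
    EuclideanSpace ℝ (Fin d) → EuclideanSpace ℝ (Fin k) :=
  fun w => (WithLp.equiv 2 (Fin k → ℝ)).symm fun i => (Real.sqrt k)⁻¹ * ∑ j, A i j * w j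

lemma jl_norm_formula {d k : ℕ} (hk : k ≠ 0) (A : Fin k → Fin d → ℝ)
    (u v : EuclideanSpace ℝ (Fin d)) (huv : u ≠ v) :
    ‖jlF A u - jlF A v‖^2 = ‖u - v‖^2 / k * jlS A u v := by
  have hnv : ‖u - v‖ ≠ 0 := by
    simp only [ne_eq, norm_eq_zero, sub_eq_zero]; exact huv
  have hkR : (0:ℝ) < k := by
    have : 0 < k := Nat.pos_of_ne_zero hk
    exact_mod_cast this
  rw [jl_eucl_norm_sq]
  have hcoord : ∀ i : Fin k, (jlF A u - jlF A v) i
      = (Real.sqrt k)⁻¹ * (‖u - v‖ * ∑ j, jlX u v j * A i j) := by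
    intro i
    rw [PiLp.sub_apply]
    show (Real.sqrt k)⁻¹ * (∑ j, A i j * u j) - (Real.sqrt k)⁻¹ * (∑ j, A i j * v j) = _
    rw [← mul_sub, ← Finset.sum_sub_distrib]
    congr 1
    rw [Finset.mul_sum]
    refine Finset.sum_congr rfl fun j _ => ?_
    unfold jlX
    field_simp
  calc ∑ i, ((jlF A u - jlF A v) i)^2
      = ∑ i, ((Real.sqrt k)⁻¹^2 * ‖u - v‖^2) * (∑ j, jlX u v j * A i j)^2 := by
        refine Finset.sum_congr rfl fun i _ => ?_
        rw [hcoord i]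
        ring
    _ = ((Real.sqrt k)⁻¹^2 * ‖u - v‖^2) * jlS A u v := by
        rw [← Finset.mul_sum]; rfl
    _ = ‖u - v‖^2 / k * jlS A u v := by
        rw [inv_pow, Real.sq_sqrt hkR.le]
        field_simp

/-- **Johnson–Lindenstrauss Theorem.** Let `X` be a set of `n` points (`n ≥ 2`) in the
Euclidean space `ℝ^d` and let `ε ∈ (0,1)`. If `k` is a natural number with
`k ≥ 4 (ε²/2 − ε³/3)⁻¹ ln n`, then there exists a map `F : ℝ^d → ℝ^k` such that for all
`u, v ∈ X`: `(1−ε)‖u−v‖² ≤ ‖F u − F v‖² ≤ (1+ε)‖u−v‖²`. -/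
theorem johnson_lindenstrauss
    (d n k : ℕ) (hn : 2 ≤ n) (ε : ℝ) (hε0 : 0 < ε) (hε1 : ε < 1)
    (X : Finset (EuclideanSpace ℝ (Fin d))) (hX : X.card = n)
    (hk : (4 * (ε ^ 2 / 2 - ε ^ 3 / 3)⁻¹ * Real.log n) ≤ (k : ℝ)) :
    ∃ F : EuclideanSpace ℝ (Fin d) → EuclideanSpace ℝ (Fin k),
      ∀ u ∈ X, ∀ v ∈ X,
        (1 - ε) * ‖u - v‖ ^ 2 ≤ ‖F u - F v‖ ^ 2 ∧
        ‖F u - F v‖ ^ 2 ≤ (1 + ε) * ‖u - v‖ ^ 2 := by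
  classical
  have hq : 0 < ε^2/2 - ε^3/3 := by nlinarith
  set q : ℝ := ε^2/2 - ε^3/3 with hqdef
  have hn1 : (1:ℝ) < n := by exact_mod_cast hn.trans_lt' one_lt_two
  have hnR : (0:ℝ) < n := by linarith
  have hlogn : 0 < Real.log n := Real.log_pos hn1
  have hkR : (0:ℝ) < k := lt_of_lt_of_le (by positivity) hk
  have hk0 : k ≠ 0 := by
    intro h; rw [h] at hkR; norm_num at hkR
  -- exponential bound
  have hexp : Real.exp (-q * k / 2) ≤ ((n:ℝ)^2)⁻¹ := by
    have h2 : ((n:ℝ)^2)⁻¹ = Real.exp (-(2 * Real.log n)) := by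
      rw [Real.exp_neg]
      congr 1
      rw [show (2:ℝ) * Real.log n = Real.log ((n:ℝ)^2) by
        rw [Real.log_pow]; push_cast; ring]
      exact (Real.exp_log (by positivity)).symm
    rw [h2]
    apply Real.exp_le_exp.mpr
    have hmul := mul_le_mul_of_nonneg_left hk (le_of_lt (show (0:ℝ) < q/2 by positivity))
    have hsimp : q/2 * (4 * q⁻¹ * Real.log n) = 2 * Real.log n := by
      field_simp
      ring
    rw [hsimp] at hmul
    linarith
  -- probability space
  set P : Measure (Fin k → Fin d → ℝ) := Measure.pi fun _ => jlΓ d with hP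
  haveI : IsProbabilityMeasure P := by rw [hP]; infer_instance
  -- enumeration of X
  have hcardX : Fintype.card {x // x ∈ X} = n := by
    rw [Fintype.card_coe, hX]
  set e : {x // x ∈ X} ≃ Fin n := (Fintype.equivFinOfCardEq hcardX) with he
  set pt : Fin n → EuclideanSpace ℝ (Fin d) := fun i => (e.symm i : {x // x ∈ X}) with hpt
  set Pairs : Finset (Fin n × Fin n) :=
    Finset.univ.filter (fun p : Fin n × Fin n => p.1 < p.2) with hPairs
  set Bad : EuclideanSpace ℝ (Fin d) → EuclideanSpace ℝ (Fin d) → Set (Fin k → Fin d → ℝ) :=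
    fun u v => {A | (1+ε) * k ≤ jlS A u v} ∪ {A | jlS A u v ≤ (1-ε) * k} with hBad
  set BadSet : Set (Fin k → Fin d → ℝ) := ⋃ p ∈ Pairs, Bad (pt p.1) (pt p.2) with hBadSet
  have hptne : ∀ p : Fin n × Fin n, p.1 < p.2 → pt p.1 ≠ pt p.2 := by
    intro p hplt heq
    have : e.symm p.1 = e.symm p.2 := Subtype.ext heq
    have := e.symm.injective this
    exact absurd this (ne_of_lt hplt)
  -- union bound
  have hbound : P BadSet ≤ (Pairs.card : ℝ≥0∞) * ENNReal.ofReal (2 * Real.exp (-q * k / 2)) := by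
    refine le_trans (measure_biUnion_finset_le _ _) ?_
    calc ∑ p ∈ Pairs, P (Bad (pt p.1) (pt p.2))
        ≤ ∑ _p ∈ Pairs, ENNReal.ofReal (2 * Real.exp (-q * k / 2)) := by
          refine Finset.sum_le_sum fun p hp => ?_
          have hplt : p.1 < p.2 := by
            rw [hPairs] at hp
            exact (Finset.mem_filter.mp hp).2
          exact jl_bad_prob d k ε hε0 hε1 _ _ (hptne p hplt)
      _ = (Pairs.card : ℝ≥0∞) * ENNReal.ofReal (2 * Real.exp (-q * k / 2)) := by
          rw [Finset.sum_const, nsmul_eq_mul]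
  have hlt1 : (Pairs.card : ℝ≥0∞) * ENNReal.ofReal (2 * Real.exp (-q * k / 2)) < 1 := by
    rw [← ENNReal.ofReal_natCast, ← ENNReal.ofReal_mul (by positivity)]
    apply ENNReal.ofReal_lt_one.mpr
    have hcard : (Pairs.card : ℝ) * 2 = (n:ℝ)*(n:ℝ) - n := by
      have h := jl_pairs_card n
      have hle : n ≤ n * n := Nat.le_mul_of_pos_left n (by omega)
      have h2 : 2 * (Pairs.card:ℝ) = ((n*n - n : ℕ):ℝ) := by
        rw [hPairs]; exact_mod_cast h
      rw [Nat.cast_sub hle] at h2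
      push_cast at h2
      linarith
    calc (Pairs.card : ℝ) * (2 * Real.exp (-q * k / 2))
        = (Pairs.card * 2) * Real.exp (-q * k / 2) := by ring
      _ = ((n:ℝ)*(n:ℝ) - n) * Real.exp (-q * k / 2) := by rw [hcard]
      _ ≤ ((n:ℝ)*(n:ℝ) - n) * ((n:ℝ)^2)⁻¹ := by
          apply mul_le_mul_of_nonneg_left hexp
          nlinarith
      _ < 1 := by
          have h1 : ((n:ℝ)*(n:ℝ) - n) < (n:ℝ)^2 := by nlinarith
          have h2 : (0:ℝ) < (n:ℝ)^2 := by positivity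
          rw [← div_eq_mul_inv]
          exact (div_lt_one h2).mpr h1
  -- pick a good A
  have hne : BadSet ≠ Set.univ := by
    intro h
    rw [h] at hbound
    have : (1:ℝ≥0∞) ≤ (Pairs.card : ℝ≥0∞) * ENNReal.ofReal (2 * Real.exp (-q * k / 2)) := by
      rw [← measure_univ (μ := P)]
      exact hbound
    exact absurd (lt_of_le_of_lt this hlt1) (lt_irrefl _)
  obtain ⟨A, hA⟩ := Set.ne_univ_iff_exists_notMem _ |>.mp hne
  -- A is good for all pairs
  have hGoodPair : ∀ p ∈ Pairs, (1-ε) * k ≤ jlS A (pt p.1) (pt p.2)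
      ∧ jlS A (pt p.1) (pt p.2) ≤ (1+ε) * k := by
    intro p hp
    have : A ∉ Bad (pt p.1) (pt p.2) := by
      intro hmem
      exact hA (Set.mem_biUnion hp hmem)
    rw [hBad] at this
    simp only [Set.mem_union, Set.mem_setOf_eq, not_or, not_le] at this
    exact ⟨le_of_lt this.2, le_of_lt this.1⟩
  have hGood : ∀ u ∈ X, ∀ v ∈ X, u ≠ v →
      (1-ε) * k ≤ jlS A u v ∧ jlS A u v ≤ (1+ε) * k := by
    intro u hu v hv huv
    set i := e ⟨u, hu⟩ with hi
    set j := e ⟨v, hv⟩ with hj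
    have hij : i ≠ j := by
      intro h
      exact huv (congrArg Subtype.val (e.injective h))
    have hui : pt i = u := by
      show ((e.symm (e ⟨u, hu⟩) : {x // x ∈ X}) : EuclideanSpace ℝ (Fin d)) = u
      rw [Equiv.symm_apply_apply]
    have hvj : pt j = v := by
      show ((e.symm (e ⟨v, hv⟩) : {x // x ∈ X}) : EuclideanSpace ℝ (Fin d)) = v
      rw [Equiv.symm_apply_apply]
    rcases lt_or_gt_of_ne hij with h | h
    · have := hGoodPair (i, j) (by rw [hPairs]; simp [h])
      rwa [hui, hvj] at this
    · have := hGoodPair (j, i) (by rw [hPairs]; simp [h])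
      rw [hui, hvj, jlS_symm] at this
      exact this
  -- conclude
  refine ⟨jlF A, fun u hu v hv => ?_⟩
  by_cases huv : u = v
  · subst huv
    simp only [sub_self, norm_zero]
    norm_num
  · have hg := hGood u hu v hv huv
    rw [jl_norm_formula hk0 A u v huv]
    have hpos : (0:ℝ) ≤ ‖u - v‖^2 / k := by positivity
    constructor
    · calc (1-ε) * ‖u-v‖^2 = ‖u-v‖^2 / k * ((1-ε) * k) := by field_simp
        _ ≤ ‖u-v‖^2 / k * jlS A u v := mul_le_mul_of_nonneg_left hg.1 hpos
    · calc ‖u-v‖^2 / k * jlS A u v ≤ ‖u-v‖^2 / k * ((1+ε) * k) :=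
          mul_le_mul_of_nonneg_left hg.2 hpos
        _ = (1+ε) * ‖u-v‖^2 := by field_simp
end

section
/- (Chi-squared concentration inequality.) Let k be a positive natural number and ε ∈ (0,1). Let μ be the product measure on ℝ^(Fin k) of k copies of the standard Gaussian measure (mean 0, variance 1) on ℝ. Then μ{ z : (1−ε)·k ≤ Σ_{i=1}^{k} z_i² ≤ (1+ε)·k } ≥ 1 − 2·exp(−(ε²−ε³)·k/4). -/
open MeasureTheory ProbabilityTheory Real
open scoped ENNReal NNReal

lemma gauss_pdf_mul (t x : ℝ) :
    gaussianPDFReal 0 1 x * Real.exp (t * x ^ 2)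
      = (Real.sqrt (2 * π))⁻¹ * Real.exp (-(1/2 - t) * x ^ 2) := by
  rw [gaussianPDFReal]
  rw [mul_assoc, ← Real.exp_add]
  norm_num
  left; ring

lemma integrable_exp_sq_gauss {t : ℝ} (ht : t < 1/2) :
    Integrable (fun x => Real.exp (t * x ^ 2)) (gaussianReal 0 1) := by
  rw [gaussianReal_of_var_ne_zero 0 one_ne_zero]
  rw [show gaussianPDF 0 1 = fun x => ((fun y => (gaussianPDFReal 0 1 y).toNNReal) x : ℝ≥0∞) from rfl]
  rw [integrable_withDensity_iff_integrable_smul ((measurable_gaussianPDFReal 0 1).real_toNNReal)]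
  have h : (fun x => ((gaussianPDFReal 0 1 x).toNNReal : ℝ≥0) • Real.exp (t * x ^ 2))
      = fun x => (Real.sqrt (2 * π))⁻¹ * Real.exp (-(1/2 - t) * x ^ 2) := by
    funext x
    rw [NNReal.smul_def, smul_eq_mul, Real.coe_toNNReal _ (gaussianPDFReal_nonneg 0 1 x),
      gauss_pdf_mul]
  rw [h]
  exact (integrable_exp_neg_mul_sq (by linarith)).const_mul _

lemma integral_exp_sq_gauss {t : ℝ} (ht : t < 1/2) :
    ∫ x, Real.exp (t * x ^ 2) ∂(gaussianReal 0 1) = (Real.sqrt (1 - 2*t))⁻¹ := by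
  rw [gaussianReal_of_var_ne_zero 0 one_ne_zero]
  rw [show gaussianPDF 0 1 = fun x => ((fun y => (gaussianPDFReal 0 1 y).toNNReal) x : ℝ≥0∞) from rfl]
  rw [integral_withDensity_eq_integral_smul ((measurable_gaussianPDFReal 0 1).real_toNNReal)]
  have h : (fun x => ((gaussianPDFReal 0 1 x).toNNReal : ℝ≥0) • Real.exp (t * x ^ 2))
      = fun x => (Real.sqrt (2 * π))⁻¹ * Real.exp (-(1/2 - t) * x ^ 2) := by
    funext x
    rw [NNReal.smul_def, smul_eq_mul, Real.coe_toNNReal _ (gaussianPDFReal_nonneg 0 1 x),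
      gauss_pdf_mul]
  rw [h, MeasureTheory.integral_const_mul _ _, integral_gaussian]
  have h2 : π / (1/2 - t) = 2 * π / (1 - 2*t) := by
    rw [div_eq_div_iff (by linarith) (by linarith)]; ring
  have hπ : (0:ℝ) < 2 * π := by positivity
  rw [h2, Real.sqrt_div hπ.le]
  field_simp

lemma pi_integrable_exp_sq (k : ℕ) {t : ℝ} (ht : t < 1/2) :
    Integrable (fun z : Fin k → ℝ => Real.exp (t * ∑ i, z i ^ 2))
      (Measure.pi fun _ : Fin k => gaussianReal 0 1) := by
  letI : MeasureSpace ℝ := ⟨gaussianReal 0 1⟩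
  haveI : SigmaFinite (volume : Measure ℝ) := inferInstanceAs (SigmaFinite (gaussianReal 0 1))
  have h : (fun z : Fin k → ℝ => Real.exp (t * ∑ i, z i ^ 2))
      = fun z => ∏ i, Real.exp (t * z i ^ 2) := by
    funext z; rw [Finset.mul_sum, Real.exp_sum]
  rw [h]
  exact Integrable.fintype_prod (f := fun _ x => Real.exp (t * x ^ 2))
    (fun _ => integrable_exp_sq_gauss ht)

lemma pi_integral_exp_sq (k : ℕ) {t : ℝ} (ht : t < 1/2) :
    ∫ z, Real.exp (t * ∑ i, z i ^ 2) ∂(Measure.pi fun _ : Fin k => gaussianReal 0 1)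
      = ((Real.sqrt (1 - 2*t))⁻¹) ^ k := by
  letI : MeasureSpace ℝ := ⟨gaussianReal 0 1⟩
  haveI : SigmaFinite (volume : Measure ℝ) := inferInstanceAs (SigmaFinite (gaussianReal 0 1))
  have h : (fun z : Fin k → ℝ => Real.exp (t * ∑ i, z i ^ 2))
      = fun z => ∏ i, Real.exp (t * z i ^ 2) := by
    funext z; rw [Finset.mul_sum, Real.exp_sum]
  rw [h]
  have := MeasureTheory.integral_fintype_prod_volume_eq_pow (ι := Fin k)
    (fun x : ℝ => Real.exp (t * x ^ 2))
  rw [show (Measure.pi fun _ : Fin k => gaussianReal 0 1) = (volume : Measure (Fin k → ℝ)) from rfl]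
  rw [this, show (volume : Measure ℝ) = gaussianReal 0 1 from rfl, integral_exp_sq_gauss ht, Fintype.card_fin]

lemma key_upper {ε : ℝ} (hε0 : 0 < ε) (hε1 : ε < 1) :
    1 + ε ≤ Real.exp (ε - (ε^2 - ε^3)/2) := by
  have hu0 : 0 ≤ ε - (ε^2 - ε^3)/2 := by nlinarith
  have h := Real.quadratic_le_exp_of_nonneg hu0
  nlinarith [h, pow_pos hε0 4, mul_nonneg (pow_pos hε0 4).le (sq_nonneg (ε-1))]

lemma key_lower {ε : ℝ} (hε0 : 0 < ε) (hε1 : ε < 1) :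
    Real.exp (ε*(1-ε) + (ε^2 - ε^3)/2) ≤ 1 + ε := by
  have harg : ε*(1-ε) + (ε^2 - ε^3)/2 = ε - ε^2/2 - ε^3/2 := by ring
  rw [harg]
  have h32 : ε^3 ≤ ε^2 := by nlinarith
  have h21 : ε^2 ≤ ε := by nlinarith
  have hu0 : 0 ≤ ε - ε^2/2 - ε^3/2 := by linarith
  have hu1 : ε - ε^2/2 - ε^3/2 ≤ 1 := by nlinarith [sq_nonneg ε, pow_pos hε0 3]
  have hue : ε - ε^2/2 - ε^3/2 ≤ ε := by nlinarith
  have h := Real.exp_bound' hu0 hu1 (n := 3) (by norm_num)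
  simp only [Finset.sum_range_succ, Finset.sum_range_zero, Nat.factorial] at h
  norm_num at h
  refine h.trans ?_
  nlinarith [pow_le_pow_left₀ hu0 hue 2, pow_le_pow_left₀ hu0 hue 3, pow_pos hε0 3]

lemma base_upper {ε : ℝ} (hε0 : 0 < ε) (hε1 : ε < 1) :
    Real.exp (-(ε/2)) * Real.sqrt (1+ε) ≤ Real.exp (-(ε^2 - ε^3)/4) := by
  have h1ε : (0:ℝ) < 1 + ε := by linarith
  have ha : 0 ≤ Real.exp (-(ε/2)) * Real.sqrt (1+ε) := by positivity
  have hb : 0 ≤ Real.exp (-(ε^2 - ε^3)/4) := (Real.exp_pos _).le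
  rw [← Real.sqrt_sq ha, ← Real.sqrt_sq hb]
  apply Real.sqrt_le_sqrt
  have e1 : (Real.exp (-(ε/2)) * Real.sqrt (1+ε))^2 = Real.exp (-ε) * (1+ε) := by
    rw [mul_pow, Real.sq_sqrt h1ε.le, sq, ← Real.exp_add,
      show -(ε/2) + -(ε/2) = -ε from by ring]
  have e2 : (Real.exp (-(ε^2 - ε^3)/4))^2 = Real.exp (-(ε^2 - ε^3)/2) := by
    rw [sq, ← Real.exp_add]; ring_nf
  rw [e1, e2]
  calc Real.exp (-ε) * (1+ε) ≤ Real.exp (-ε) * Real.exp (ε - (ε^2 - ε^3)/2) :=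
        mul_le_mul_of_nonneg_left (key_upper hε0 hε1) (Real.exp_pos _).le
    _ = Real.exp (-(ε^2 - ε^3)/2) := by rw [← Real.exp_add]; ring_nf

lemma base_lower {ε : ℝ} (hε0 : 0 < ε) (hε1 : ε < 1) :
    Real.exp (ε*(1-ε)/2) * (Real.sqrt (1+ε))⁻¹ ≤ Real.exp (-(ε^2 - ε^3)/4) := by
  have h1ε : (0:ℝ) < 1 + ε := by linarith
  have hs : (0:ℝ) < Real.sqrt (1+ε) := Real.sqrt_pos.mpr h1ε
  have ha : 0 ≤ Real.exp (ε*(1-ε)/2) * (Real.sqrt (1+ε))⁻¹ := by positivity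
  have hb : 0 ≤ Real.exp (-(ε^2 - ε^3)/4) := (Real.exp_pos _).le
  rw [← Real.sqrt_sq ha, ← Real.sqrt_sq hb]
  apply Real.sqrt_le_sqrt
  have e1 : (Real.exp (ε*(1-ε)/2) * (Real.sqrt (1+ε))⁻¹)^2
      = Real.exp (ε*(1-ε)) * (1+ε)⁻¹ := by
    rw [mul_pow, inv_pow, Real.sq_sqrt h1ε.le, sq, ← Real.exp_add,
      show ε*(1-ε)/2 + ε*(1-ε)/2 = ε*(1-ε) from by ring]
  have e2 : (Real.exp (-(ε^2 - ε^3)/4))^2 = Real.exp (-(ε^2 - ε^3)/2) := by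
    rw [sq, ← Real.exp_add]; ring_nf
  rw [e1, e2]
  rw [mul_inv_le_iff₀ h1ε]
  calc Real.exp (ε*(1-ε))
      = Real.exp (ε*(1-ε) + (ε^2 - ε^3)/2) * Real.exp (-(ε^2 - ε^3)/2) := by
        rw [← Real.exp_add]; ring_nf
    _ ≤ (1+ε) * Real.exp (-(ε^2 - ε^3)/2) :=
        mul_le_mul_of_nonneg_right (key_lower hε0 hε1) (Real.exp_pos _).le
    _ = Real.exp (-(ε^2 - ε^3)/2) * (1+ε) := by ring

lemma tail_upper (k : ℕ) {ε : ℝ} (hε0 : 0 < ε) (hε1 : ε < 1) :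
    ((Measure.pi fun _ : Fin k => gaussianReal 0 1)
      {z : Fin k → ℝ | (1 + ε) * k ≤ ∑ i, z i ^ 2}).toReal
      ≤ Real.exp (-(ε^2 - ε^3) * k / 4) := by
  have h1ε : (0:ℝ) < 1 + ε := by linarith
  set t : ℝ := ε / (2 * (1 + ε)) with htdef
  have ht0 : 0 ≤ t := by positivity
  have ht : t < 1/2 := by
    rw [htdef, div_lt_iff₀ (by linarith)]
    linarith
  have h12t : 1 - 2 * t = (1+ε)⁻¹ := by
    rw [htdef]; field_simp; ring
  have hcher := measure_ge_le_exp_mul_mgf (X := fun z : Fin k → ℝ => ∑ i, z i ^ 2)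
      (μ := Measure.pi fun _ => gaussianReal 0 1) ((1+ε) * k) ht0 (pi_integrable_exp_sq k ht)
  have hmgf : mgf (fun z : Fin k → ℝ => ∑ i, z i ^ 2)
      (Measure.pi fun _ => gaussianReal 0 1) t = (Real.sqrt (1+ε)) ^ k := by
    rw [mgf, pi_integral_exp_sq k ht, h12t, Real.sqrt_inv, inv_inv]
  rw [hmgf] at hcher
  refine hcher.trans ?_
  have h1 : -t * ((1+ε) * k) = (k:ℝ) * (-(ε/2)) := by
    rw [htdef]; field_simp
  have h2 : -(ε^2 - ε^3) * k / 4 = (k:ℝ) * (-(ε^2 - ε^3)/4) := by ring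
  rw [h1, h2, Real.exp_nat_mul, Real.exp_nat_mul, ← mul_pow]
  exact pow_le_pow_left₀ (by positivity) (base_upper hε0 hε1) k

lemma tail_lower (k : ℕ) {ε : ℝ} (hε0 : 0 < ε) (hε1 : ε < 1) :
    ((Measure.pi fun _ : Fin k => gaussianReal 0 1)
      {z : Fin k → ℝ | ∑ i, z i ^ 2 ≤ (1 - ε) * k}).toReal
      ≤ Real.exp (-(ε^2 - ε^3) * k / 4) := by
  have h1ε : (0:ℝ) < 1 + ε := by linarith
  set t : ℝ := -(ε/2) with htdef
  have ht0 : t ≤ 0 := by rw [htdef]; linarith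
  have ht : t < 1/2 := by rw [htdef]; linarith
  have h12t : 1 - 2 * t = 1 + ε := by rw [htdef]; ring
  have hcher := measure_le_le_exp_mul_mgf (X := fun z : Fin k → ℝ => ∑ i, z i ^ 2)
      (μ := Measure.pi fun _ => gaussianReal 0 1) ((1-ε) * k) ht0 (pi_integrable_exp_sq k ht)
  have hmgf : mgf (fun z : Fin k → ℝ => ∑ i, z i ^ 2)
      (Measure.pi fun _ => gaussianReal 0 1) t = ((Real.sqrt (1+ε))⁻¹) ^ k := by
    rw [mgf, pi_integral_exp_sq k ht, h12t]
  rw [hmgf] at hcher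
  refine hcher.trans ?_
  have h1 : -t * ((1-ε) * k) = (k:ℝ) * (ε*(1-ε)/2) := by rw [htdef]; ring
  have h2 : -(ε^2 - ε^3) * k / 4 = (k:ℝ) * (-(ε^2 - ε^3)/4) := by ring
  rw [h1, h2, Real.exp_nat_mul, Real.exp_nat_mul, ← mul_pow]
  exact pow_le_pow_left₀ (by positivity) (base_lower hε0 hε1) k

/-- **Chi-squared concentration inequality.** Let `k > 0`, `ε ∈ (0,1)` and let `μ` be the
`k`-fold product of standard Gaussian measures on `ℝ^(Fin k)`. Then
`μ { z : (1−ε) k ≤ Σ z_i² ≤ (1+ε) k } ≥ 1 − 2 exp(−(ε²−ε³) k/4)`. -/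
theorem chi_squared_concentration
    (k : ℕ) (hk : 0 < k) (ε : ℝ) (hε0 : 0 < ε) (hε1 : ε < 1) :
    (Measure.pi fun _ : Fin k => gaussianReal 0 1)
      {z : Fin k → ℝ |
        (1 - ε) * k ≤ ∑ i, z i ^ 2 ∧ ∑ i, z i ^ 2 ≤ (1 + ε) * k}
      ≥ ENNReal.ofReal (1 - 2 * Real.exp (-(ε ^ 2 - ε ^ 3) * k / 4)) := by
  set μ := Measure.pi fun _ : Fin k => gaussianReal 0 1 with hμ
  haveI : IsProbabilityMeasure μ := by rw [hμ]; infer_instance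
  set A := {z : Fin k → ℝ |
      (1 - ε) * k ≤ ∑ i, z i ^ 2 ∧ ∑ i, z i ^ 2 ≤ (1 + ε) * k} with hA
  have hSm : Measurable fun z : Fin k → ℝ => ∑ i, z i ^ 2 :=
    Finset.measurable_sum _ fun i _ => (measurable_pi_apply i).pow_const 2
  have hAm : MeasurableSet A :=
    (measurableSet_le measurable_const hSm).inter (measurableSet_le hSm measurable_const)
  have hsub : Aᶜ ⊆ {z : Fin k → ℝ | ∑ i, z i ^ 2 ≤ (1-ε)*k}
      ∪ {z : Fin k → ℝ | (1+ε)*k ≤ ∑ i, z i ^ 2} := by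
    intro z hz
    simp only [hA, Set.mem_compl_iff, Set.mem_setOf_eq, not_and_or, not_le] at hz
    rcases hz with h | h
    · exact Or.inl h.le
    · exact Or.inr h.le
  have hc : μ Aᶜ ≤ μ {z : Fin k → ℝ | ∑ i, z i ^ 2 ≤ (1-ε)*k}
      + μ {z : Fin k → ℝ | (1+ε)*k ≤ ∑ i, z i ^ 2} :=
    (measure_mono hsub).trans (measure_union_le _ _)
  have hct : (μ Aᶜ).toReal ≤ 2 * Real.exp (-(ε^2 - ε^3) * k / 4) := by
    have h1 := tail_lower k hε0 hε1
    have h2 := tail_upper k hε0 hε1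
    have hne : μ {z : Fin k → ℝ | ∑ i, z i ^ 2 ≤ (1-ε)*k}
        + μ {z : Fin k → ℝ | (1+ε)*k ≤ ∑ i, z i ^ 2} ≠ ⊤ :=
      ENNReal.add_ne_top.mpr ⟨measure_ne_top _ _, measure_ne_top _ _⟩
    have h3 := ENNReal.toReal_mono hne hc
    rw [ENNReal.toReal_add (measure_ne_top _ _) (measure_ne_top _ _)] at h3
    rw [hμ] at h3
    linarith
  have hAc : (μ Aᶜ).toReal = 1 - (μ A).toReal := by
    rw [prob_compl_eq_one_sub hAm,
      ENNReal.toReal_sub_of_le prob_le_one ENNReal.one_ne_top, ENNReal.toReal_one]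
  have key : 1 - 2 * Real.exp (-(ε^2 - ε^3) * k / 4) ≤ (μ A).toReal := by linarith
  calc ENNReal.ofReal (1 - 2 * Real.exp (-(ε ^ 2 - ε ^ 3) * k / 4))
      ≤ ENNReal.ofReal ((μ A).toReal) := ENNReal.ofReal_le_ofReal key
    _ = μ A := ENNReal.ofReal_toReal (measure_ne_top _ _)
end

section
/- (Distribution of the squared norm of a Gaussian projection.) Let k, d be positive natural numbers and let u ∈ ℝ^d be a fixed vector. Let the law of the random k×d real matrix R be the product over (i,j) ∈ Fin k × Fin d of standard Gaussian measures (mean 0, variance 1) on ℝ. Then the pushforward of this law under the map R ↦ ‖R·u‖² equals the pushforward of the product of k standard Gaussian measures on ℝ^(Fin k) under the map z ↦ ‖u‖²·Σ_{i=1}^{k} z_i². In particular, ‖R·u‖² is distributed as ‖u‖² times a chi-squared random variable with k degrees of freedom. -/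
open MeasureTheory ProbabilityTheory

section auxlemmas

variable {α : Type*} [MeasurableSpace α]

lemma aux_map_eval_pi {ι : Type*} [Fintype ι] [DecidableEq ι] (μ : ι → Measure α)
    [∀ i, IsProbabilityMeasure (μ i)] (i : ι) :
    Measure.map (Function.eval i) (Measure.pi μ) = μ i := by
  ext s hs
  rw [Measure.map_apply (measurable_pi_apply i) hs]
  have h : Function.eval i ⁻¹' s
      = Set.univ.pi (Function.update (fun _ : ι => (Set.univ : Set α)) i s) := by
    ext x
    simp only [Set.mem_preimage, Set.mem_univ_pi, Function.update_apply, Function.eval]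
    constructor
    · intro hx j
      split <;> simp_all
    · intro hx
      simpa using hx i
  rw [h, Measure.pi_pi]
  rw [Finset.prod_eq_single i (fun j _ hj => by simp [Function.update_apply, hj]) (by simp)]
  simp

lemma aux_map_uncurry (k d : ℕ) (μ : Measure ℝ) [IsProbabilityMeasure μ] :
    Measure.map (fun M : Fin k → Fin d → ℝ => fun p : Fin k × Fin d => M p.1 p.2)
        (Measure.pi fun _ : Fin k => Measure.pi fun _ : Fin d => μ)
      = Measure.pi fun _ : Fin k × Fin d => μ := by
  have hmeas : Measurable (fun M : Fin k → Fin d → ℝ => fun p : Fin k × Fin d => M p.1 p.2) :=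
    measurable_pi_lambda _ fun p => (measurable_pi_apply p.2).comp (measurable_pi_apply p.1)
  refine (Measure.pi_eq fun s hs => ?_).symm
  rw [Measure.map_apply hmeas (MeasurableSet.univ_pi hs)]
  have h : (fun M : Fin k → Fin d → ℝ => fun p : Fin k × Fin d => M p.1 p.2) ⁻¹' Set.univ.pi s
      = Set.univ.pi fun i => Set.univ.pi fun j => s (i, j) := by
    ext M
    simp [Prod.forall]
  rw [h, Measure.pi_pi]
  simp_rw [Measure.pi_pi]
  exact (Fintype.prod_prod_type fun p : Fin k × Fin d => μ (s p)).symm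

lemma aux_lmarginal_prod {ι : Type*} [Fintype ι] [DecidableEq ι] (μ : ι → Measure α)
    [∀ i, SigmaFinite (μ i)] (h : ι → α → ENNReal) (hm : ∀ i, Measurable (h i)) (s : Finset ι) :
    (∫⋯∫⁻_s, (fun x => ∏ i, h i (x i)) ∂μ)
      = fun x => (∏ i ∈ s, ∫⁻ y, h i y ∂μ i) * ∏ i ∈ sᶜ, h i (x i) := by
  have hf : Measurable fun x : ι → α => ∏ j, h j (x j) :=
    Finset.measurable_prod Finset.univ fun j _ => (hm j).comp (measurable_pi_apply j)
  induction s using Finset.induction_on with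
  | empty => simp
  | @insert i s hi ih =>
    funext x
    rw [lmarginal_insert _ hf hi, ih]
    have hine : i ∈ sᶜ := Finset.mem_compl.2 hi
    have hsplit : ∀ y : α, ∏ j ∈ sᶜ, h j (Function.update x i y j)
        = h i y * ∏ j ∈ (insert i s)ᶜ, h j (x j) := by
      intro y
      rw [← Finset.mul_prod_erase _ _ hine, Function.update_self, Finset.compl_insert]
      congr 1
      refine Finset.prod_congr rfl fun j hj => ?_
      rw [Function.update_of_ne (Finset.ne_of_mem_erase hj)]
    simp_rw [hsplit]
    rw [lintegral_const_mul _ ((hm i).mul_const _), lintegral_mul_const _ (hm i),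
      Finset.prod_insert hi]
    ring

lemma aux_lintegral_pi_prod {ι : Type*} [Fintype ι] (μ : ι → Measure ℝ)
    [∀ i, SigmaFinite (μ i)] (h : ι → ℝ → ENNReal) (hm : ∀ i, Measurable (h i)) :
    ∫⁻ x : ι → ℝ, ∏ i, h i (x i) ∂Measure.pi μ = ∏ i, ∫⁻ y, h i y ∂μ i := by
  classical
  rw [lintegral_eq_lmarginal_univ (fun _ => (0 : ℝ)),
    aux_lmarginal_prod μ h hm Finset.univ]
  simp

lemma aux_pi_withDensity (d : ℕ) (g : ℝ → ENNReal) (hg : Measurable g)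
    (hsf : SigmaFinite ((volume : Measure ℝ).withDensity g)) :
    (Measure.pi fun _ : Fin d => (volume : Measure ℝ).withDensity g)
      = (volume : Measure (Fin d → ℝ)).withDensity fun x => ∏ j, g (x j) := by
  refine Measure.pi_eq fun s hs => ?_
  rw [withDensity_apply _ (MeasurableSet.univ_pi hs),
    ← lintegral_indicator (MeasurableSet.univ_pi hs)]
  have hind : (Set.univ.pi s).indicator (fun x : Fin d → ℝ => ∏ j, g (x j))
      = fun x => ∏ j, (s j).indicator g (x j) := by
    funext x
    by_cases hx : x ∈ Set.univ.pi s
    · rw [Set.indicator_of_mem hx]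
      exact Finset.prod_congr rfl fun j _ =>
        (Set.indicator_of_mem (hx j (Set.mem_univ j)) g).symm
    · rw [Set.indicator_of_notMem hx]
      rw [Set.mem_univ_pi] at hx
      push_neg at hx
      obtain ⟨j, hj⟩ := hx
      exact (Finset.prod_eq_zero (Finset.mem_univ j)
        (Set.indicator_of_notMem hj g)).symm
  rw [hind, volume_pi, aux_lintegral_pi_prod _ _ (fun j => hg.indicator (hs j))]
  exact Finset.prod_congr rfl fun j _ => by
    rw [lintegral_indicator (hs j), withDensity_apply _ (hs j)]

lemma aux_gauss_density (d : ℕ) (x : EuclideanSpace ℝ (Fin d)) :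
    ∏ j, gaussianPDF 0 1 (x j)
      = ENNReal.ofReal ((Real.sqrt (2 * Real.pi))⁻¹ ^ d * Real.exp (-‖x‖ ^ 2 / 2)) := by
  have hpdf : ∀ t : ℝ, gaussianPDF 0 1 t
      = ENNReal.ofReal ((Real.sqrt (2 * Real.pi))⁻¹ * Real.exp (-t ^ 2 / 2)) := by
    intro t
    rw [gaussianPDF, gaussianPDFReal]
    norm_num
  have hnorm : ‖x‖ ^ 2 = ∑ j, x j ^ 2 := by
    rw [EuclideanSpace.norm_eq, Real.sq_sqrt (Finset.sum_nonneg fun j _ => sq_nonneg _)]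
    exact Finset.sum_congr rfl fun j _ => by rw [Real.norm_eq_abs, sq_abs]
  simp_rw [hpdf]
  rw [← ENNReal.ofReal_prod_of_nonneg (fun j _ => by positivity)]
  congr 1
  rw [Finset.prod_mul_distrib, Finset.prod_const, Finset.card_univ, Fintype.card_fin,
    ← Real.exp_sum, hnorm]
  congr 1
  rw [← Finset.sum_div]
  congr 1
  rw [← Finset.sum_neg_distrib]

lemma aux_map_withDensity {β γ : Type*} [MeasurableSpace β] [MeasurableSpace γ] (e : β ≃ᵐ γ)
    (μ : Measure β) (F : γ → ENNReal) (hF : Measurable F) :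
    Measure.map e (μ.withDensity (F ∘ e)) = (Measure.map e μ).withDensity F := by
  ext s hs
  rw [Measure.map_apply e.measurable hs, withDensity_apply _ hs,
    withDensity_apply _ (e.measurable hs), setLIntegral_map hs hF e.measurable]
  rfl

end auxlemmas
section gaussE

open MeasureTheory ProbabilityTheory

lemma aux_F_meas (d : ℕ) : Measurable (fun x : EuclideanSpace ℝ (Fin d) =>
    ENNReal.ofReal ((Real.sqrt (2 * Real.pi))⁻¹ ^ d * Real.exp (-‖x‖ ^ 2 / 2))) :=
  ((continuous_const.mul (Real.continuous_exp.comp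
    (((continuous_norm.pow 2).neg).div_const 2))).measurable).ennreal_ofReal

lemma aux_gaussianE (d : ℕ) :
    Measure.map (⇑((MeasurableEquiv.toLp 2 (Fin d → ℝ)).symm).symm)
        (Measure.pi fun _ : Fin d => gaussianReal 0 1)
      = (volume : Measure (EuclideanSpace ℝ (Fin d))).withDensity
          (fun x => ENNReal.ofReal ((Real.sqrt (2 * Real.pi))⁻¹ ^ d
            * Real.exp (-‖x‖ ^ 2 / 2))) := by
  have hsf : SigmaFinite ((volume : Measure ℝ).withDensity (gaussianPDF 0 1)) := by
    rw [← gaussianReal_of_var_ne_zero 0 one_ne_zero]; infer_instance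
  have h1 : (Measure.pi fun _ : Fin d => gaussianReal 0 1)
      = (volume : Measure (Fin d → ℝ)).withDensity fun x => ∏ j, gaussianPDF 0 1 (x j) := by
    simp_rw [gaussianReal_of_var_ne_zero 0 one_ne_zero]
    exact aux_pi_withDensity d _ (measurable_gaussianPDF 0 1) hsf
  have h2 : (fun x : Fin d → ℝ => ∏ j, gaussianPDF 0 1 (x j))
      = (fun x : EuclideanSpace ℝ (Fin d) => ENNReal.ofReal ((Real.sqrt (2 * Real.pi))⁻¹ ^ d
          * Real.exp (-‖x‖ ^ 2 / 2))) ∘ ⇑((MeasurableEquiv.toLp 2 (Fin d → ℝ)).symm).symm := by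
    funext x
    exact aux_gauss_density d (((MeasurableEquiv.toLp 2 (Fin d → ℝ)).symm).symm x)
  rw [h1, h2, aux_map_withDensity _ _ _ (aux_F_meas d),
    (MeasurePreserving.symm _ (EuclideanSpace.volume_preserving_symm_measurableEquiv_toLp (Fin d))).map_eq]

lemma aux_invariance (d : ℕ) (L : EuclideanSpace ℝ (Fin d) ≃ₗᵢ[ℝ] EuclideanSpace ℝ (Fin d)) :
    Measure.map (⇑L) ((volume : Measure (EuclideanSpace ℝ (Fin d))).withDensity
        (fun x => ENNReal.ofReal ((Real.sqrt (2 * Real.pi))⁻¹ ^ d * Real.exp (-‖x‖ ^ 2 / 2))))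
      = (volume : Measure (EuclideanSpace ℝ (Fin d))).withDensity
          (fun x => ENNReal.ofReal ((Real.sqrt (2 * Real.pi))⁻¹ ^ d
            * Real.exp (-‖x‖ ^ 2 / 2))) := by
  set F : EuclideanSpace ℝ (Fin d) → ENNReal := fun x =>
    ENNReal.ofReal ((Real.sqrt (2 * Real.pi))⁻¹ ^ d * Real.exp (-‖x‖ ^ 2 / 2)) with hF
  have hFL : F ∘ ⇑L.toMeasurableEquiv = F := by
    funext x
    simp only [Function.comp_apply, LinearIsometryEquiv.coe_toMeasurableEquiv, hF]
    rw [L.norm_map]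
  have hcoe : (⇑L : EuclideanSpace ℝ (Fin d) → EuclideanSpace ℝ (Fin d))
      = ⇑L.toMeasurableEquiv := rfl
  rw [hcoe]
  calc Measure.map ⇑L.toMeasurableEquiv (volume.withDensity F)
      = Measure.map ⇑L.toMeasurableEquiv (volume.withDensity (F ∘ ⇑L.toMeasurableEquiv)) := by
        rw [hFL]
    _ = (Measure.map ⇑L.toMeasurableEquiv volume).withDensity F :=
        aux_map_withDensity _ _ _ (aux_F_meas d)
    _ = volume.withDensity F := by
        rw [LinearIsometryEquiv.coe_toMeasurableEquiv, L.measurePreserving.map_eq]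

end gaussE
section dot

open MeasureTheory ProbabilityTheory

lemma aux_map_dot (d : ℕ) (u : EuclideanSpace ℝ (Fin d)) :
    Measure.map (fun x : Fin d → ℝ => ∑ j, x j * u j)
        (Measure.pi fun _ : Fin d => gaussianReal 0 1)
      = gaussianReal 0 (‖u‖₊ ^ 2) := by
  by_cases hu : u = 0
  · subst hu
    have h0 : (fun x : Fin d → ℝ => ∑ j, x j * (0 : EuclideanSpace ℝ (Fin d)) j)
        = fun _ => (0 : ℝ) := by
      funext x
      have : ∀ j, (0 : EuclideanSpace ℝ (Fin d)) j = 0 := fun j => rfl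
      simp [this]
    rw [h0, Measure.map_const]
    simp [gaussianReal_zero_var]
  · have hr : ‖u‖ ≠ 0 := norm_ne_zero_iff.2 hu
    obtain ⟨j₀, hj₀⟩ : ∃ j, u j ≠ 0 := by
      by_contra h
      push_neg at h
      exact hu (by ext j; exact h j)
    have hcard : Module.finrank ℝ (EuclideanSpace ℝ (Fin d)) = Fintype.card (Fin d) := by
      simp
    have horth : Orthonormal ℝ (({j₀} : Set (Fin d)).restrict
        (fun _ : Fin d => ‖u‖⁻¹ • u)) := by
      constructor
      · intro i
        show ‖‖u‖⁻¹ • u‖ = 1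
        rw [norm_smul, norm_inv, norm_norm, inv_mul_cancel₀ hr]
      · intro i j hij
        exact absurd (Subtype.ext ((Set.mem_singleton_iff.1 i.2).trans
          (Set.mem_singleton_iff.1 j.2).symm)) hij
    obtain ⟨b, hb⟩ := horth.exists_orthonormalBasis_extension_of_card_eq hcard
    have hbj : b j₀ = ‖u‖⁻¹ • u := hb j₀ rfl
    set em := (MeasurableEquiv.toLp 2 (Fin d → ℝ)).symm with hem
    have hφm : Measurable (⇑em ∘ ⇑b.repr ∘ ⇑em.symm) :=
      em.measurable.comp ((b.repr.continuous.measurable).comp em.symm.measurable)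
    have hφ : Measure.map (⇑em ∘ ⇑b.repr ∘ ⇑em.symm)
        (Measure.pi fun _ : Fin d => gaussianReal 0 1)
        = Measure.pi fun _ : Fin d => gaussianReal 0 1 := by
      rw [show (⇑em ∘ ⇑b.repr ∘ ⇑em.symm) = (⇑em ∘ ⇑b.repr) ∘ ⇑em.symm from rfl]
      rw [← Measure.map_map (em.measurable.comp b.repr.continuous.measurable)
          em.symm.measurable,
        ← Measure.map_map em.measurable b.repr.continuous.measurable,
        aux_gaussianE d, aux_invariance d b.repr, ← aux_gaussianE d,
        MeasurableEquiv.map_map_symm]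
    have hfun : (fun x : Fin d → ℝ => ∑ j, x j * u j)
        = ((fun t : ℝ => ‖u‖ * t) ∘ Function.eval j₀) ∘ (⇑em ∘ ⇑b.repr ∘ ⇑em.symm) := by
      funext x
      show ∑ j, x j * u j = ‖u‖ * (b.repr (em.symm x) j₀)
      rw [OrthonormalBasis.repr_apply_apply, hbj, real_inner_smul_left, ← mul_assoc,
        mul_inv_cancel₀ hr, one_mul, PiLp.inner_apply]
      refine Finset.sum_congr rfl fun j _ => ?_
      have hy : (em.symm x) j = x j := rfl
      rw [RCLike.inner_apply, hy]
      simp [mul_comm]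
    rw [hfun, ← Measure.map_map
        ((measurable_const_mul ‖u‖).comp (measurable_pi_apply j₀)) hφm,
      hφ, ← Measure.map_map (measurable_const_mul ‖u‖) (measurable_pi_apply j₀),
      aux_map_eval_pi, gaussianReal_map_const_mul]
    congr 1
    · simp
    · ext
      simp [NNReal.coe_pow]

end dot
open MeasureTheory ProbabilityTheory

/-- **Distribution of the squared norm of a Gaussian projection.** For a fixed `u ∈ ℝ^d` and a
random `k × d` matrix `R` with i.i.d. standard normal entries, the law of `‖R u‖²` equals the
law of `‖u‖² · Σ_{i<k} z_i²` where `z` has the `k`-fold product standard Gaussian law; i.e.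
`‖R u‖²` is distributed as `‖u‖²` times a chi-squared random variable with `k` degrees of
freedom. -/
theorem gaussian_projection_sq_norm_law
    (k d : ℕ) (hk : 0 < k) (hd : 0 < d) (u : EuclideanSpace ℝ (Fin d)) :
    Measure.map
        (fun R : Fin k × Fin d → ℝ =>
          ‖(WithLp.equiv 2 (Fin k → ℝ)).symm
              ((Matrix.of fun i j => R (i, j)).mulVec (WithLp.equiv 2 (Fin d → ℝ) u))‖ ^ 2)
        (Measure.pi fun _ : Fin k × Fin d => gaussianReal 0 1)
      =
    Measure.map
        (fun z : Fin k → ℝ => ‖u‖ ^ 2 * ∑ i, z i ^ 2)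
        (Measure.pi fun _ : Fin k => gaussianReal 0 1) := by
  classical
  have hnorm : ∀ w : Fin k → ℝ, ‖(WithLp.equiv 2 (Fin k → ℝ)).symm w‖ ^ 2 = ∑ i, w i ^ 2 := by
    intro w
    rw [EuclideanSpace.norm_eq, Real.sq_sqrt (Finset.sum_nonneg fun i _ => sq_nonneg _)]
    exact Finset.sum_congr rfl fun i _ => by
      show ‖w i‖ ^ 2 = w i ^ 2; rw [Real.norm_eq_abs, sq_abs]
  have hΦeq : (fun R : Fin k × Fin d → ℝ =>
      ‖(WithLp.equiv 2 (Fin k → ℝ)).symm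
          ((Matrix.of fun i j => R (i, j)).mulVec (WithLp.equiv 2 (Fin d → ℝ) u))‖ ^ 2)
      = fun R => ∑ i, (∑ j, R (i, j) * u j) ^ 2 := by
    funext R
    rw [hnorm]
    exact Finset.sum_congr rfl fun i _ => by congr 1
  rw [hΦeq]
  have hSm : Measurable (fun y : Fin k → ℝ => ∑ i, y i ^ 2) :=
    Finset.measurable_sum _ fun i _ => (measurable_pi_apply i).pow_const 2
  have hS'm : Measurable (fun R : Fin k × Fin d → ℝ => ∑ i, (∑ j, R (i, j) * u j) ^ 2) :=
    Finset.measurable_sum _ fun i _ => (Finset.measurable_sum _ fun j _ =>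
      (by fun_prop : Measurable fun R : Fin k × Fin d → ℝ => R (i, j) * u j)).pow_const 2
  have huncm : Measurable (fun M : Fin k → Fin d → ℝ => fun p : Fin k × Fin d => M p.1 p.2) :=
    measurable_pi_lambda _ fun p => (measurable_pi_apply p.2).comp (measurable_pi_apply p.1)
  have hTm : Measurable (fun M : Fin k → Fin d → ℝ => fun i : Fin k => ∑ j, M i j * u j) := by
    refine measurable_pi_lambda _ fun i => Finset.measurable_sum _ fun j _ => ?_
    have h1 : Measurable fun M : Fin k → Fin d → ℝ => M i j :=
      (measurable_pi_apply j).comp (measurable_pi_apply i)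
    exact h1.mul_const (u j)
  rw [← aux_map_uncurry k d (gaussianReal 0 1), Measure.map_map hS'm huncm]
  have hct : (fun R : Fin k × Fin d → ℝ => ∑ i, (∑ j, R (i, j) * u j) ^ 2)
      ∘ (fun M : Fin k → Fin d → ℝ => fun p : Fin k × Fin d => M p.1 p.2)
      = (fun y : Fin k → ℝ => ∑ i, y i ^ 2)
        ∘ (fun M : Fin k → Fin d → ℝ => fun i : Fin k => ∑ j, M i j * u j) := rfl
  rw [hct, ← Measure.map_map hSm hTm]
  have hT : Measure.map (fun M : Fin k → Fin d → ℝ => fun i : Fin k => ∑ j, M i j * u j)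
      (Measure.pi fun _ : Fin k => Measure.pi fun _ : Fin d => gaussianReal 0 1)
      = Measure.pi fun _ : Fin k => gaussianReal 0 (‖u‖₊ ^ 2) :=
    (measurePreserving_pi _ _ fun _ => ⟨Finset.measurable_sum _ fun j _ =>
      (by fun_prop : Measurable fun x : Fin d → ℝ => x j * u j), aux_map_dot d u⟩).map_eq
  rw [hT]
  have hsc : ∀ _ : Fin k, MeasurePreserving (fun t : ℝ => ‖u‖ * t)
      (gaussianReal 0 1) (gaussianReal 0 (‖u‖₊ ^ 2)) := by
    intro i
    refine ⟨measurable_const_mul _, ?_⟩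
    rw [gaussianReal_map_const_mul]
    congr 1
    · simp
    · ext
      simp [NNReal.coe_pow]
  have hscale : (Measure.pi fun _ : Fin k => gaussianReal 0 (‖u‖₊ ^ 2))
      = Measure.map (fun z : Fin k → ℝ => fun i => ‖u‖ * z i)
          (Measure.pi fun _ : Fin k => gaussianReal 0 1) :=
    ((measurePreserving_pi _ _ hsc).map_eq).symm
  rw [hscale, Measure.map_map hSm (measurable_pi_lambda _ fun i =>
    (measurable_pi_apply i).const_mul _)]
  congr 1
  funext z
  simp [mul_pow, Finset.mul_sum]
end

section
/- (Universal approximation of the random-projection Gaussian RBF network.) Let x₀ < x_end be real numbers, let [a₁, a₂] ⊂ ℝ be a nondegenerate interval, and let [g₁, g₂] ⊂ (0,∞) be a nondegenerate interval. Let ((α_j, γ_j))_{j∈ℕ} be an i.i.d. sequence of random pairs where α_j is uniformly distributed on [a₁, a₂], γ_j is uniformly distributed on [g₁, g₂], and α_j is independent of γ_j; set β_j = 1/γ_j and define the random Gaussian basis functions G_j(x) = exp(−(x + α_j)²/β_j). Then almost surely (with respect to the infinite product measure on the sequence space) the following holds: for every continuous function φ : [x₀, x_end] → ℝ, lim_{h→∞}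 inf_{w ∈ ℝ^h} ∫_{x₀}^{x_end} ( Σ_{j=1}^{h} w_j·G_j(x) − φ(x) )² dx = 0; that is, the distance in L²([x₀, x_end]) from φ to the span of the first h random basis functions tends to 0 as h → ∞, with probability 1. -/
open MeasureTheory Filter

section AuxRBFSection
open Set
open scoped RealInnerProductSpace ENNReal
noncomputable section
namespace AuxRBF
/-- the Gaussian bump -/
def gf (c t x : ℝ) : ℝ := Real.exp (-((x + c) ^ 2 * t))

lemma gf_eq (c t x : ℝ) : Real.exp (-(x + c) ^ 2 / t⁻¹) = gf c t x := by
  rw [gf, div_inv_eq_mul, neg_mul]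

lemma continuous_gf {c t : ℝ} : Continuous (gf c t) := by
  unfold gf; fun_prop

lemma continuous_gf2 {x : ℝ} : Continuous (fun p : ℝ × ℝ => gf p.1 p.2 x) := by
  unfold gf; fun_prop

lemma gf_pos {c t x : ℝ} : 0 < gf c t x := Real.exp_pos _

lemma gf_le_one {c t x : ℝ} (ht : 0 ≤ t) : gf c t x ≤ 1 := by
  rw [gf, Real.exp_le_one_iff, neg_nonpos]
  positivity

lemma abs_gf_le_one {c t x : ℝ} (ht : 0 ≤ t) : |gf c t x| ≤ 1 := by
  rw [abs_of_pos gf_pos]; exact gf_le_one ht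

lemma hasDerivAt_gf (t x c : ℝ) :
    HasDerivAt (fun c => gf c t x) (-(2 * (x + c) * t) * gf c t x) c := by
  have h1 : HasDerivAt (fun c : ℝ => x + c) 1 c := (hasDerivAt_id c).const_add x
  have h2 : HasDerivAt (fun c : ℝ => -((x + c) ^ 2 * t)) (-(2 * (x + c) * t)) c := by
    have := ((h1.pow 2).mul_const t).neg
    simpa [mul_comm, mul_assoc, mul_left_comm, Pi.neg_def] using this
  simpa [gf, mul_comm, mul_assoc, mul_left_comm] using h2.exp

variable {x₀ xend : ℝ}

lemma memL2_of_continuousOn (hx : x₀ ≤ xend) {u : ℝ → ℝ} (hu : ContinuousOn u (Icc x₀ xend)) :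
    MemLp u 2 (volume.restrict (Icc x₀ xend)) := by
  obtain ⟨C, hC⟩ := (isCompact_Icc).exists_bound_of_continuousOn hu
  exact MemLp.of_bound (hu.aestronglyMeasurable measurableSet_Icc) C
    ((ae_restrict_mem measurableSet_Icc).mono fun x hx => hC x hx)

lemma integrable_mul_contOn {f u : ℝ → ℝ}
    (hf : Integrable f (volume.restrict (Icc x₀ xend)))
    (hu : ContinuousOn u (Icc x₀ xend)) :
    Integrable (fun x => f x * u x) (volume.restrict (Icc x₀ xend)) := by
  obtain ⟨C, hC⟩ := isCompact_Icc.exists_bound_of_continuousOn hu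
  have := hf.bdd_mul (hu.aestronglyMeasurable measurableSet_Icc)
    ((ae_restrict_mem measurableSet_Icc).mono fun x hx => hC x hx)
  exact this.congr (Eventually.of_forall fun x => mul_comm _ _)

lemma interval_eq_mu (hx : x₀ ≤ xend) (F : ℝ → ℝ) :
    (∫ x in x₀..xend, F x) = ∫ x, F x ∂(volume.restrict (Icc x₀ xend)) := by
  rw [intervalIntegral.integral_of_le hx,
    Measure.restrict_congr_set Ioc_ae_eq_Icc]

lemma exists_poly_near (x₀ xend : ℝ) {ψ : ℝ → ℝ} (hψ : Continuous ψ) {ε : ℝ} (hε : 0 < ε) :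
    ∃ q : Polynomial ℝ, ∀ y ∈ Icc x₀ xend, |ψ y - q.eval y| ≤ ε := by
  set ψ' : C(Icc x₀ xend, ℝ) := ⟨fun y => ψ y, by fun_prop⟩ with hψ'
  have hmem : ψ' ∈ closure ((polynomialFunctions (Icc x₀ xend)) : Set C(Icc x₀ xend, ℝ)) := by
    rw [← Subalgebra.topologicalClosure_coe, polynomialFunctions_closure_eq_top x₀ xend]
    trivial
  obtain ⟨p, hp, hdist⟩ := Metric.mem_closure_iff.mp hmem ε hε
  rw [polynomialFunctions_coe] at hp
  obtain ⟨q, rfl⟩ := hp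
  refine ⟨q, fun y hy => ?_⟩
  have := ContinuousMap.dist_apply_le_dist (f := ψ') (g := Polynomial.toContinuousMapOnAlgHom _ q) ⟨y, hy⟩
  have h2 : dist (ψ y) (q.eval y) ≤ dist ψ' (Polynomial.toContinuousMapOnAlgHom _ q) := by
    simpa [ψ', Polynomial.toContinuousMapOnAlgHom] using this
  rw [Real.dist_eq] at h2
  exact h2.trans hdist.le


variable {a₁ a₂ g₁ g₂ : ℝ}

lemma continuous_pow_mul_gf (n : ℕ) (c t : ℝ) :
    Continuous (fun x : ℝ => x ^ n * gf c t x) := by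
  unfold gf; fun_prop

lemma F_continuousAt {f : ℝ → ℝ}
    (hf : Integrable f (volume.restrict (Icc x₀ xend)))
    {c₀ t₀ : ℝ} (ht₀ : 0 < t₀) :
    ContinuousAt (fun p : ℝ × ℝ => ∫ x, f x * gf p.1 p.2 x ∂(volume.restrict (Icc x₀ xend)))
      (c₀, t₀) := by
  apply continuousAt_of_dominated (bound := fun x => |f x|)
  · exact Eventually.of_forall fun p =>
      hf.aestronglyMeasurable.mul continuous_gf.aestronglyMeasurable
  · have hpos : ∀ᶠ p : ℝ × ℝ in nhds (c₀, t₀), 0 < p.2 :=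
      (isOpen_lt continuous_const continuous_snd).eventually_mem (by exact ht₀)
    filter_upwards [hpos] with p hp
    refine Eventually.of_forall fun x => ?_
    have h1 : |gf p.1 p.2 x| ≤ 1 := abs_gf_le_one hp.le
    calc ‖f x * gf p.1 p.2 x‖ = |f x| * |gf p.1 p.2 x| := abs_mul _ _
      _ ≤ |f x| * 1 := by gcongr
      _ = |f x| := mul_one _
  · exact hf.abs
  · exact Eventually.of_forall fun x => (continuous_const.mul continuous_gf2).continuousAt

lemma F_zero_on_rect {f : ℝ → ℝ}
    (hf : Integrable f (volume.restrict (Icc x₀ xend)))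
    (hg₁ : 0 < g₁) {A Γ : ℕ → ℝ}
    (hdense : Icc a₁ a₂ ×ˢ Icc g₁ g₂ ⊆ closure (Set.range fun j => (A j, Γ j)))
    (horth : ∀ j, ∫ x, f x * gf (A j) (Γ j) x ∂(volume.restrict (Icc x₀ xend)) = 0)
    {c t : ℝ} (hc : c ∈ Icc a₁ a₂) (ht : t ∈ Icc g₁ g₂) :
    ∫ x, f x * gf c t x ∂(volume.restrict (Icc x₀ xend)) = 0 := by
  set F : ℝ × ℝ → ℝ :=
    fun p => ∫ x, f x * gf p.1 p.2 x ∂(volume.restrict (Icc x₀ xend)) with hF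
  have hmem : (c, t) ∈ closure (Set.range fun j => (A j, Γ j)) :=
    hdense (Set.mk_mem_prod hc ht)
  obtain ⟨u, hu_mem, hu_tend⟩ := mem_closure_iff_seq_limit.mp hmem
  have hcont : ContinuousAt F (c, t) := F_continuousAt hf (lt_of_lt_of_le hg₁ ht.1)
  have h1 : Tendsto (F ∘ u) atTop (nhds (F (c, t))) := (hcont.tendsto).comp hu_tend
  have h2 : F ∘ u = fun _ => 0 := by
    funext n
    obtain ⟨j, hj⟩ := hu_mem n
    simp only [Function.comp_apply, ← hj, hF]
    exact horth j
  rw [h2] at h1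
  exact (tendsto_nhds_unique tendsto_const_nhds h1).symm

lemma moments_zero (ha : a₁ < a₂) (hg₁ : 0 < g₁) {f : ℝ → ℝ}
    (hf : Integrable f (volume.restrict (Icc x₀ xend)))
    (hbase : ∀ c ∈ Icc a₁ a₂, ∫ x, f x * gf c g₁ x ∂(volume.restrict (Icc x₀ xend)) = 0) :
    ∀ n : ℕ, ∀ c ∈ Ioo a₁ a₂,
      ∫ x, f x * (x ^ n * gf c g₁ x) ∂(volume.restrict (Icc x₀ xend)) = 0 := by
  set μ := (volume : Measure ℝ).restrict (Icc x₀ xend) with hμ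
  intro n
  induction n with
  | zero =>
    intro c hc
    simpa using hbase c (Ioo_subset_Icc_self hc)
  | succ n IH =>
    intro c hc
    set Mx : ℝ := max |x₀| |xend| with hMx
    have habs : ∀ x ∈ Icc x₀ xend, |x| ≤ Mx := by
      intro x hx'
      rw [abs_le]
      constructor
      · have h1 := neg_abs_le x₀
        have h2 := le_max_left |x₀| |xend|
        have := hx'.1; simp only [hMx]; linarith
      · have h1 := le_abs_self xend
        have h2 := le_max_right |x₀| |xend|
        have := hx'.2; simp only [hMx]; linarith
    set K : ℝ := Mx ^ n * (2 * (Mx + (|c| + 1)) * g₁) with hK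
    set F : ℝ → ℝ → ℝ := fun c' x => f x * (x ^ n * gf c' g₁ x) with hF
    set F' : ℝ → ℝ → ℝ :=
      fun c' x => f x * (x ^ n * (-(2 * (x + c') * g₁) * gf c' g₁ x)) with hF'
    have key := hasDerivAt_integral_of_dominated_loc_of_deriv_le
      (μ := μ) (F := F) (F' := F') (x₀ := c) (bound := fun x => K * |f x|) (Metric.ball_mem_nhds c one_pos)
      (Eventually.of_forall fun c' =>
        hf.aestronglyMeasurable.mul (continuous_pow_mul_gf n c' g₁).aestronglyMeasurable)
      (integrable_mul_contOn hf (continuous_pow_mul_gf n c g₁).continuousOn)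
      (hf.aestronglyMeasurable.mul (Continuous.aestronglyMeasurable (by unfold gf; fun_prop)))
      ?_ ((hf.abs.const_mul K)) ?_
    · -- use the derivative
      have hzero : HasDerivAt (fun c' => ∫ x, F c' x ∂μ) 0 c := by
        have hev : (fun c' => ∫ x, F c' x ∂μ) =ᶠ[nhds c] fun _ => 0 := by
          filter_upwards [isOpen_Ioo.eventually_mem hc] with y hy using IH y hy
        exact (hasDerivAt_const c (0 : ℝ)).congr_of_eventuallyEq hev
      have hder0 : ∫ x, F' c x ∂μ = 0 := key.2.unique hzero
      have hint1 : Integrable (fun x => f x * (x ^ (n + 1) * gf c g₁ x)) μ :=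
        integrable_mul_contOn hf (continuous_pow_mul_gf (n + 1) c g₁).continuousOn
      have hint0 : Integrable (fun x => f x * (x ^ n * gf c g₁ x)) μ :=
        integrable_mul_contOn hf (continuous_pow_mul_gf n c g₁).continuousOn
      have hrw : ∫ x, F' c x ∂μ =
          (-(2 * g₁)) * ∫ x, f x * (x ^ (n + 1) * gf c g₁ x) ∂μ +
          (-(2 * g₁ * c)) * ∫ x, f x * (x ^ n * gf c g₁ x) ∂μ := by
        rw [← integral_const_mul, ← integral_const_mul,
          ← integral_add (hint1.const_mul _) (hint0.const_mul _)]
        refine integral_congr_ae (Eventually.of_forall fun x => ?_)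
        simp only [hF']
        rw [pow_succ]
        ring
      rw [hrw, IH c hc, mul_zero, add_zero, mul_eq_zero] at hder0
      rcases hder0 with h | h
      · exfalso; nlinarith
      · exact h
    · -- the bound
      filter_upwards [ae_restrict_mem measurableSet_Icc] with x hxI
      intro c' hc'
      have h1 : |x| ≤ Mx := habs x hxI
      have hc'' : |c'| ≤ |c| + 1 := by
        have hd : |c' - c| < 1 := by
          have := Metric.mem_ball.mp hc'
          rwa [Real.dist_eq] at this
        have := abs_sub_abs_le_abs_sub c' c
        linarith
      have h2 : |x + c'| ≤ Mx + (|c| + 1) :=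
        (abs_add_le x c').trans (add_le_add h1 hc'')
      have e : ‖F' c' x‖ = |f x| * (|x| ^ n * ((2 * |x + c'| * g₁) * |gf c' g₁ x|)) := by
        simp only [hF', Real.norm_eq_abs, abs_mul, abs_pow, abs_neg, abs_two,
          abs_of_pos hg₁]
      have hb : |f x| * (|x| ^ n * ((2 * |x + c'| * g₁) * |gf c' g₁ x|)) ≤
          |f x| * (Mx ^ n * ((2 * (Mx + (|c| + 1)) * g₁) * 1)) := by
        gcongr <;>
          first
            | exact h1
            | exact h2
            | exact abs_gf_le_one hg₁.le
            | positivity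
      rw [e]
      refine hb.trans (le_of_eq ?_)
      rw [hK]; ring
    · -- differentiability
      refine Eventually.of_forall fun x => fun c' _ => ?_
      exact ((hasDerivAt_gf g₁ x c').const_mul (x ^ n)).const_mul (f x)

lemma ortho_zero (ha : a₁ < a₂) (hg₁ : 0 < g₁) (hgg : g₁ ≤ g₂)
    {A Γ : ℕ → ℝ}
    (hdense : Icc a₁ a₂ ×ˢ Icc g₁ g₂ ⊆ closure (Set.range fun j => (A j, Γ j)))
    {f : ℝ → ℝ} (hf : Integrable f (volume.restrict (Icc x₀ xend)))
    (horth : ∀ j, ∫ x, f x * gf (A j) (Γ j) x ∂(volume.restrict (Icc x₀ xend)) = 0) :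
    f =ᵐ[(volume : Measure ℝ).restrict (Icc x₀ xend)] 0 := by
  set μ := (volume : Measure ℝ).restrict (Icc x₀ xend) with hμ
  set c₀ : ℝ := (a₁ + a₂) / 2 with hc₀
  have hc₀mem : c₀ ∈ Ioo a₁ a₂ := ⟨by simp only [hc₀]; linarith, by simp only [hc₀]; linarith⟩
  have hbase : ∀ c ∈ Icc a₁ a₂, ∫ x, f x * gf c g₁ x ∂μ = 0 := fun c hc =>
    F_zero_on_rect hf hg₁ hdense horth hc (left_mem_Icc.mpr hgg)
  have hmom := moments_zero ha hg₁ hf hbase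
  set g : ℝ → ℝ := fun x => f x * gf c₀ g₁ x with hgdef
  have hg_int : Integrable g μ := integrable_mul_contOn hf continuous_gf.continuousOn
  have hpoly : ∀ q : Polynomial ℝ, ∫ x, g x * q.eval x ∂μ = 0 := by
    intro q
    have hrw : (fun x => g x * q.eval x) = fun x =>
        ∑ i ∈ Finset.range (q.natDegree + 1), q.coeff i * (f x * (x ^ i * gf c₀ g₁ x)) := by
      funext x
      rw [Polynomial.eval_eq_sum_range, Finset.mul_sum]
      exact Finset.sum_congr rfl fun i _ => by simp only [hgdef]; ring
    rw [hrw, integral_finset_sum _ fun i _ =>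
      ((integrable_mul_contOn hf (continuous_pow_mul_gf i c₀ g₁).continuousOn).const_mul _)]
    refine Finset.sum_eq_zero fun i _ => ?_
    rw [integral_const_mul, hmom i c₀ hc₀mem, mul_zero]
  have hcont0 : ∀ ψ : ℝ → ℝ, Continuous ψ → ∫ x, ψ x * g x ∂μ = 0 := by
    intro ψ hψ
    set B : ℝ := ∫ x, |g x| ∂μ with hB
    have hB0 : 0 ≤ B := integral_nonneg fun x => abs_nonneg _
    have key : ∀ ε : ℝ, 0 < ε → |∫ x, ψ x * g x ∂μ| ≤ ε * (B + 1) := by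
      intro ε hε
      obtain ⟨q, hq⟩ := exists_poly_near x₀ xend hψ hε
      have hqg : Integrable (fun x => g x * q.eval x) μ :=
        integrable_mul_contOn hg_int q.continuous.continuousOn
      have hsub : Integrable (fun x => (ψ x - q.eval x) * g x) μ :=
        (integrable_mul_contOn hg_int ((hψ.sub q.continuous).continuousOn)).congr
          (Eventually.of_forall fun x => mul_comm _ _)
      have h2 : ∫ x, ψ x * g x ∂μ =
          ∫ x, (ψ x - q.eval x) * g x ∂μ + ∫ x, g x * q.eval x ∂μ := by
        rw [← integral_add hsub hqg]
        exact integral_congr_ae (Eventually.of_forall fun x => by ring)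
      rw [h2, hpoly q, add_zero]
      have h3 : |∫ x, (ψ x - q.eval x) * g x ∂μ| ≤ ∫ x, |(ψ x - q.eval x) * g x| ∂μ := by
        simpa [Real.norm_eq_abs, abs_mul] using
          norm_integral_le_integral_norm (f := fun x => (ψ x - q.eval x) * g x) (μ := μ)
      refine h3.trans ?_
      have h4 : ∫ x, |(ψ x - q.eval x) * g x| ∂μ ≤ ∫ x, ε * |g x| ∂μ := by
        refine integral_mono_ae hsub.abs (hg_int.abs.const_mul ε) ?_
        filter_upwards [ae_restrict_mem measurableSet_Icc] with x hxI
        rw [abs_mul]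
        exact mul_le_mul_of_nonneg_right (hq x hxI) (abs_nonneg _)
      refine h4.trans ?_
      rw [integral_const_mul]
      nlinarith
    have habs : |∫ x, ψ x * g x ∂μ| ≤ 0 := by
      by_contra hcon
      push_neg at hcon
      have hk := key (|∫ x, ψ x * g x ∂μ| / (2 * (B + 1))) (by positivity)
      have : |∫ x, ψ x * g x ∂μ| / (2 * (B + 1)) * (B + 1) = |∫ x, ψ x * g x ∂μ| / 2 := by
        field_simp
      rw [this] at hk
      linarith
    have := le_antisymm habs (abs_nonneg _)
    exact abs_eq_zero.mp this
  have hg0 : g =ᵐ[μ] 0 := ae_eq_zero_of_integral_contDiff_smul_eq_zero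
    hg_int.locallyIntegrable
    (fun ψ hψ _ => by simpa [smul_eq_mul] using hcont0 ψ hψ.continuous)
  filter_upwards [hg0] with x hx0
  simp only [hgdef, Pi.zero_apply] at hx0 ⊢
  rcases mul_eq_zero.mp hx0 with h | h
  · exact h
  · exact absurd h (ne_of_gt gf_pos)

lemma coeFn_finset_sum {ι : Type*} (s : Finset ι)
    (F : ι → Lp ℝ 2 ((volume : Measure ℝ).restrict (Icc x₀ xend))) :
    ↑↑(∑ i ∈ s, F i) =ᵐ[(volume : Measure ℝ).restrict (Icc x₀ xend)]
      fun x => ∑ i ∈ s, F i x := by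
  classical
  induction s using Finset.induction_on with
  | empty => simp only [Finset.sum_empty]; exact Lp.coeFn_zero ℝ 2 ((volume : Measure ℝ).restrict (Icc x₀ xend))
  | insert a s' hnot ih =>
    rw [Finset.sum_insert hnot]
    filter_upwards [Lp.coeFn_add (F a) (∑ i ∈ s', F i), ih] with x h1 h2
    rw [h1]
    simp only [Pi.add_apply, h2, Finset.sum_insert hnot]

lemma approx (hx : x₀ < xend) (ha : a₁ < a₂) (hg₁ : 0 < g₁) (hgg : g₁ ≤ g₂)
    {A Γ : ℕ → ℝ}
    (hdense : Icc a₁ a₂ ×ˢ Icc g₁ g₂ ⊆ closure (Set.range fun j => (A j, Γ j)))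
    {φ : ℝ → ℝ} (hφ : ContinuousOn φ (Icc x₀ xend)) {ε : ℝ} (hε : 0 < ε) :
    ∃ N : ℕ, ∃ w : Fin N → ℝ,
      ∫ x, (∑ j, w j * gf (A j) (Γ j) x - φ x) ^ 2
        ∂((volume : Measure ℝ).restrict (Icc x₀ xend)) < ε := by
  classical
  haveI : Fact ((1 : ℝ≥0∞) ≤ 2) := fact_one_le_two_ennreal
  set μ := (volume : Measure ℝ).restrict (Icc x₀ xend) with hμ
  have gmem : ∀ j : ℕ, MemLp (fun x => gf (A j) (Γ j) x) 2 μ := fun j =>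
    memL2_of_continuousOn hx.le continuous_gf.continuousOn
  set gL : ℕ → Lp ℝ 2 μ := fun j => (gmem j).toLp _ with hgL
  set ΦL : Lp ℝ 2 μ := (memL2_of_continuousOn hx.le hφ).toLp φ with hΦL
  set S : Submodule ℝ (Lp ℝ 2 μ) := Submodule.span ℝ (Set.range gL) with hS
  have hdenseS : S.topologicalClosure = ⊤ := by
    rw [Submodule.topologicalClosure_eq_top_iff, Submodule.eq_bot_iff]
    intro v hv
    have horthv : ∀ j, ∫ x, (v : ℝ → ℝ) x * gf (A j) (Γ j) x ∂μ = 0 := by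
      intro j
      have h0 : (inner ℝ (gL j) v : ℝ) = 0 :=
        (Submodule.mem_orthogonal S v).mp hv (gL j) (Submodule.subset_span ⟨j, rfl⟩)
      rw [L2.inner_def] at h0
      rw [← h0]
      refine integral_congr_ae ?_
      filter_upwards [(gmem j).coeFn_toLp] with x hx1
      simp [RCLike.inner_apply, conj_trivial, hgL, hx1, mul_comm]
    have hint : Integrable (fun x => (v : ℝ → ℝ) x) μ :=
      memLp_one_iff_integrable.mp ((Lp.memLp v).mono_exponent one_le_two)
    have hv0 : (fun x => (v : ℝ → ℝ) x) =ᵐ[μ] 0 :=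
      ortho_zero ha hg₁ hgg hdense hint horthv
    exact Lp.eq_zero_iff_ae_eq_zero.mpr hv0
  have hΦc : ΦL ∈ closure (S : Set (Lp ℝ 2 μ)) := by
    rw [← Submodule.topologicalClosure_coe, hdenseS]
    trivial
  obtain ⟨v, hvS, hvdist⟩ := Metric.mem_closure_iff.mp hΦc (Real.sqrt ε)
    (Real.sqrt_pos.mpr hε)
  rw [SetLike.mem_coe, hS] at hvS
  obtain ⟨cw, rfl⟩ := Finsupp.mem_span_range_iff_exists_finsupp.mp hvS
  set N : ℕ := (cw.support.sup id) + 1 with hN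
  have hsupp : cw.support ⊆ Finset.range N := by
    intro j hj
    rw [Finset.mem_range, hN]
    exact Nat.lt_succ_of_le (Finset.le_sup (f := id) hj)
  refine ⟨N, fun j => cw j.val, ?_⟩
  -- identify the sum function
  set u : ℝ → ℝ := fun x => ∑ j : Fin N, cw j.val * gf (A j.val) (Γ j.val) x with hu
  have hmain : ↑↑(cw.sum fun j a => a • gL j) =ᵐ[μ] u := by
    rw [Finsupp.sum]
    have h1 := coeFn_finset_sum (x₀ := x₀) (xend := xend) cw.support
      (fun j => cw j • gL j)
    refine h1.trans ?_
    have h2 : ∀ j, ↑↑(cw j • gL j) =ᵐ[μ] fun x => cw j * gf (A j) (Γ j) x := by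
      intro j
      filter_upwards [Lp.coeFn_smul (cw j) (gL j), (gmem j).coeFn_toLp] with x e1 e2
      rw [e1]
      simp [e2, hgL]
    have h3 : ∀ᵐ x ∂μ, ∀ j ∈ cw.support, (cw j • gL j) x = cw j * gf (A j) (Γ j) x :=
      (ae_ball_iff (Finset.countable_toSet _)).mpr fun j _ => h2 j
    filter_upwards [h3] with x hx3
    rw [hu]
    calc ∑ j ∈ cw.support, (cw j • gL j) x
        = ∑ j ∈ cw.support, cw j * gf (A j) (Γ j) x :=
          Finset.sum_congr rfl fun j hj => hx3 j hj
      _ = ∑ j ∈ Finset.range N, cw j * gf (A j) (Γ j) x := by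
          refine Finset.sum_subset hsupp fun j _ hj => ?_
          rw [Finsupp.notMem_support_iff.mp hj, zero_mul]
      _ = ∑ j : Fin N, cw j.val * gf (A j.val) (Γ j.val) x :=
          (Fin.sum_univ_eq_sum_range _ N).symm
  set v := cw.sum fun j a => a • gL j with hv
  have hcongr : ∫ x, (u x - φ x) ^ 2 ∂μ = ∫ x, ((v - ΦL : Lp ℝ 2 μ) x) ^ 2 ∂μ := by
    refine integral_congr_ae ?_
    filter_upwards [hmain, (memL2_of_continuousOn hx.le hφ).coeFn_toLp,
      Lp.coeFn_sub v ΦL] with x e1 e2 e3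
    rw [e3]
    simp [e1, e2, hΦL]
  have hnorm : ∫ x, ((v - ΦL : Lp ℝ 2 μ) x) ^ 2 ∂μ = ‖v - ΦL‖ ^ 2 := by
    rw [← real_inner_self_eq_norm_sq, L2.inner_def]
    refine integral_congr_ae (Eventually.of_forall fun x => ?_)
    simp [RCLike.inner_apply, conj_trivial, sq]
  have hlt : ‖v - ΦL‖ ^ 2 < ε := by
    have hd : ‖v - ΦL‖ < Real.sqrt ε := by
      rw [← dist_eq_norm]
      rw [dist_comm]
      exact hvdist
    have := pow_lt_pow_left₀ hd (norm_nonneg _) (by norm_num : 2 ≠ 0)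
    rwa [Real.sq_sqrt hε.le] at this
  calc ∫ x, (u x - φ x) ^ 2 ∂μ = ‖v - ΦL‖ ^ 2 := by rw [hcongr, hnorm]
    _ < ε := hlt

lemma det_main (hx : x₀ < xend) (ha : a₁ < a₂) (hg₁ : 0 < g₁) (hgg : g₁ ≤ g₂)
    {A Γ : ℕ → ℝ}
    (hdense : Icc a₁ a₂ ×ˢ Icc g₁ g₂ ⊆ closure (Set.range fun j => (A j, Γ j)))
    {φ : ℝ → ℝ} (hφ : ContinuousOn φ (Icc x₀ xend)) :
    Tendsto (fun h : ℕ => ⨅ w : Fin h → ℝ,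
      ∫ x in x₀..xend, (∑ j, w j * Real.exp (-(x + A j) ^ 2 / (Γ j)⁻¹) - φ x) ^ 2)
      atTop (nhds 0) := by
  have hIeq : ∀ (h : ℕ) (w : Fin h → ℝ),
      (∫ x in x₀..xend, (∑ j, w j * Real.exp (-(x + A j) ^ 2 / (Γ j)⁻¹) - φ x) ^ 2) =
      ∫ x in x₀..xend, (∑ j, w j * gf (A j) (Γ j) x - φ x) ^ 2 := by
    intro h w
    congr 1
    funext x
    simp_rw [gf_eq]
  set I : (h : ℕ) → (Fin h → ℝ) → ℝ := fun h w =>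
    ∫ x in x₀..xend, (∑ j, w j * gf (A j) (Γ j) x - φ x) ^ 2 with hI
  have hrw : (fun h : ℕ => ⨅ w : Fin h → ℝ,
      ∫ x in x₀..xend, (∑ j, w j * Real.exp (-(x + A j) ^ 2 / (Γ j)⁻¹) - φ x) ^ 2) =
      fun h : ℕ => ⨅ w : Fin h → ℝ, I h w := by
    funext h
    exact iInf_congr fun w => hIeq h w
  rw [hrw]
  have hnn : ∀ (h : ℕ) (w : Fin h → ℝ), 0 ≤ I h w := fun h w =>
    intervalIntegral.integral_nonneg hx.le fun u _ => sq_nonneg _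
  have hbdd : ∀ h : ℕ, BddBelow (Set.range (I h)) := fun h =>
    ⟨0, by rintro y ⟨w, rfl⟩; exact hnn h w⟩
  have hinf_nonneg : ∀ h : ℕ, 0 ≤ ⨅ w : Fin h → ℝ, I h w := fun h => le_ciInf (hnn h)
  have hanti : Antitone fun h : ℕ => ⨅ w : Fin h → ℝ, I h w := by
    refine antitone_nat_of_succ_le fun n => ?_
    refine le_ciInf fun w => ?_
    have heq : I (n + 1) (Fin.snoc w 0) = I n w := by
      simp only [hI]
      congr 1
      funext x
      congr 1
      rw [Fin.sum_univ_castSucc]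
      simp [Fin.snoc_castSucc]
    exact (ciInf_le (hbdd (n + 1)) _).trans heq.le
  have happrox : ∀ ε : ℝ, 0 < ε → ∃ N : ℕ, (⨅ w : Fin N → ℝ, I N w) < ε := by
    intro ε hε
    obtain ⟨N, w, hw⟩ := approx hx ha hg₁ hgg hdense hφ hε
    refine ⟨N, (ciInf_le (hbdd N) w).trans_lt ?_⟩
    show (∫ x in x₀..xend, (∑ j, w j * gf (A j) (Γ j) x - φ x) ^ 2) < ε
    rw [interval_eq_mu hx.le]
    exact hw
  rw [Metric.tendsto_atTop]
  intro ε hε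
  obtain ⟨N, hN⟩ := happrox ε hε
  refine ⟨N, fun n hn => ?_⟩
  rw [Real.dist_eq, sub_zero, abs_of_nonneg (hinf_nonneg n)]
  exact lt_of_le_of_lt (hanti hn) hN

lemma meas_Ioo_ne_zero {a b c q δ : ℝ} (hab : a < b) (hc : c ∈ Icc a b)
    (hq : q < c) (hδ : c < q + δ) :
    ((ENNReal.ofReal (b - a))⁻¹ • (volume : Measure ℝ).restrict (Icc a b))
      (Ioo q (q + δ)) ≠ 0 := by
  rw [Measure.smul_apply, smul_eq_mul, Measure.restrict_apply measurableSet_Ioo]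
  have hsub : Ioo (max q a) (min (q + δ) b) ⊆ Ioo q (q + δ) ∩ Icc a b := by
    intro y hy
    constructor
    · exact ⟨lt_of_le_of_lt (le_max_left _ _) hy.1, lt_of_lt_of_le hy.2 (min_le_left _ _)⟩
    · exact ⟨(le_max_right q a).trans hy.1.le, hy.2.le.trans (min_le_right _ _)⟩
  have hlt : max q a < min (q + δ) b := by
    apply max_lt
    · exact lt_min (by linarith) (lt_of_lt_of_le hq hc.2)
    · exact lt_min (lt_of_le_of_lt hc.1 hδ) hab
  have hpos : 0 < volume (Ioo q (q + δ) ∩ Icc a b) := by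
    calc (0 : ℝ≥0∞) < ENNReal.ofReal (min (q + δ) b - max q a) :=
          ENNReal.ofReal_pos.mpr (by linarith)
      _ = volume (Ioo (max q a) (min (q + δ) b)) := (Real.volume_Ioo).symm
      _ ≤ volume (Ioo q (q + δ) ∩ Icc a b) := measure_mono hsub
  refine (ENNReal.mul_pos ?_ hpos.ne').ne'
  rw [Ne, ENNReal.inv_eq_zero]
  exact ENNReal.ofReal_ne_top

end AuxRBF
end
end AuxRBFSection

/-- **Universal approximation of the random-projection Gaussian RBF network.** Let
`((α_j, γ_j))_{j∈ℕ}` be an i.i.d. sequence of random pairs with `α_j` uniform on `[a₁,a₂]`,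
`γ_j` uniform on `[g₁,g₂] ⊂ (0,∞)` and `α_j` independent of `γ_j`; set `β_j = 1/γ_j` and
`G_j(x) = exp(−(x+α_j)²/β_j)`. Then almost surely, for every continuous `φ` on `[x₀,x_end]`,
the `L²` distance from `φ` to the span of `G_1,…,G_h` tends to `0` as `h → ∞`. -/
theorem rpnn_gaussian_rbf_universal_approximation
    (x₀ xend : ℝ) (hx : x₀ < xend)
    (a₁ a₂ : ℝ) (ha : a₁ < a₂)
    (g₁ g₂ : ℝ) (hg₁ : 0 < g₁) (hg : g₁ < g₂)
    {Ω : Type*} [MeasurableSpace Ω] (P : Measure Ω) [IsProbabilityMeasure P]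
    (α γ : ℕ → Ω → ℝ)
    (hmeas : ∀ j : ℕ, Measurable fun ω => (α j ω, γ j ω))
    (hindep : ProbabilityTheory.iIndepFun
      (fun j ω => (α j ω, γ j ω)) P)
    (hdist : ∀ j : ℕ, P.map (fun ω => (α j ω, γ j ω)) =
      ((ENNReal.ofReal (a₂ - a₁))⁻¹ • (volume : Measure ℝ).restrict (Set.Icc a₁ a₂)).prod
        ((ENNReal.ofReal (g₂ - g₁))⁻¹ • (volume : Measure ℝ).restrict (Set.Icc g₁ g₂))) :
    ∀ᵐ ω ∂P, ∀ φ : ℝ → ℝ, ContinuousOn φ (Set.Icc x₀ xend) →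
      Tendsto
        (fun h : ℕ => ⨅ w : Fin h → ℝ,
          ∫ x in x₀..xend,
            (∑ j, w j * Real.exp (-(x + α j ω) ^ 2 / (γ j ω)⁻¹) - φ x) ^ 2)
        atTop (nhds 0) := by
  classical
  set R : Set (ℝ × ℝ) := Set.Icc a₁ a₂ ×ˢ Set.Icc g₁ g₂ with hR
  set ν₁ : Measure ℝ :=
    (ENNReal.ofReal (a₂ - a₁))⁻¹ • (volume : Measure ℝ).restrict (Set.Icc a₁ a₂) with hν₁
  set ν₂ : Measure ℝ :=
    (ENNReal.ofReal (g₂ - g₁))⁻¹ • (volume : Measure ℝ).restrict (Set.Icc g₁ g₂) with hν₂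
  have huniv : ∀ (u v : ℝ), u < v →
      ((ENNReal.ofReal (v - u))⁻¹ • (volume : Measure ℝ).restrict (Set.Icc u v))
        (Set.Icc u v) = 1 := by
    intro u v huv
    rw [Measure.smul_apply, smul_eq_mul, Measure.restrict_apply measurableSet_Icc,
      Set.inter_self, Real.volume_Icc]
    exact ENNReal.inv_mul_cancel
      (ENNReal.ofReal_pos.mpr (by linarith)).ne' ENNReal.ofReal_ne_top
  haveI hpm₁ : IsProbabilityMeasure ν₁ := by
    constructor
    rw [hν₁, Measure.smul_apply, smul_eq_mul, Measure.restrict_apply MeasurableSet.univ,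
      Set.univ_inter, Real.volume_Icc]
    exact ENNReal.inv_mul_cancel
      (ENNReal.ofReal_pos.mpr (by linarith)).ne' ENNReal.ofReal_ne_top
  haveI hpm₂ : IsProbabilityMeasure ν₂ := by
    constructor
    rw [hν₂, Measure.smul_apply, smul_eq_mul, Measure.restrict_apply MeasurableSet.univ,
      Set.univ_inter, Real.volume_Icc]
    exact ENNReal.inv_mul_cancel
      (ENNReal.ofReal_pos.mpr (by linarith)).ne' ENNReal.ofReal_ne_top
  -- the hitting lemma
  have hhit : ∀ U : Set (ℝ × ℝ), MeasurableSet U → ν₁.prod ν₂ U ≠ 0 →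
      ∀ᵐ ω ∂P, ∃ j, (α j ω, γ j ω) ∈ U := by
    intro U hU hνU
    have hmap : ∀ j, P ((fun ω => (α j ω, γ j ω)) ⁻¹' Uᶜ) = ν₁.prod ν₂ Uᶜ := fun j => by
      rw [← Measure.map_apply (hmeas j) hU.compl, hdist j]
    set C : Set Ω := ⋂ j, (fun ω => (α j ω, γ j ω)) ⁻¹' Uᶜ with hC
    have hCzero : P C = 0 := by
      have hle : ∀ N : ℕ, P C ≤ (ν₁.prod ν₂ Uᶜ) ^ N := by
        intro N
        have hprod : P (⋂ j ∈ Finset.range N, (fun ω => (α j ω, γ j ω)) ⁻¹' Uᶜ) =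
            ∏ j ∈ Finset.range N, P ((fun ω => (α j ω, γ j ω)) ⁻¹' Uᶜ) :=
          hindep.meas_biInter fun j _ => ⟨Uᶜ, hU.compl, rfl⟩
        calc P C ≤ P (⋂ j ∈ Finset.range N, (fun ω => (α j ω, γ j ω)) ⁻¹' Uᶜ) := by
              refine measure_mono ?_
              intro ω hω
              rw [hC] at hω
              simp only [Set.mem_iInter] at hω ⊢
              exact fun j _ => hω j
          _ = ∏ j ∈ Finset.range N, P ((fun ω => (α j ω, γ j ω)) ⁻¹' Uᶜ) := hprod
          _ = (ν₁.prod ν₂ Uᶜ) ^ N := by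
              rw [Finset.prod_congr rfl fun j _ => hmap j, Finset.prod_const,
                Finset.card_range]
      have hq : ν₁.prod ν₂ Uᶜ < 1 := by
        rw [measure_compl hU (measure_ne_top _ _), measure_univ]
        exact ENNReal.sub_lt_self ENNReal.one_ne_top one_ne_zero hνU
      have htend := ENNReal.tendsto_pow_atTop_nhds_zero_of_lt_one hq
      have hle0 : P C ≤ 0 := ge_of_tendsto htend (Eventually.of_forall hle)
      exact le_antisymm hle0 zero_le
    rw [ae_iff]
    have hset : {ω | ¬ ∃ j, (α j ω, γ j ω) ∈ U} = C := by
      ext ω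
      simp [hC]
    rw [hset]
    exact hCzero
  -- a.s. all samples in the rectangle
  have hRmeas : MeasurableSet R := measurableSet_Icc.prod measurableSet_Icc
  have hmemae : ∀ᵐ ω ∂P, ∀ j, (α j ω, γ j ω) ∈ R := by
    rw [ae_all_iff]
    intro j
    have hfull : ν₁.prod ν₂ R = 1 := by
      rw [hR, Measure.prod_prod]
      rw [hν₁, hν₂, huniv a₁ a₂ ha, huniv g₁ g₂ hg, one_mul]
    have hcompl : ν₁.prod ν₂ Rᶜ = 0 := by
      rw [measure_compl hRmeas (measure_ne_top _ _), measure_univ, hfull, tsub_self]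
    have h1 : P ((fun ω => (α j ω, γ j ω)) ⁻¹' Rᶜ) = ν₁.prod ν₂ Rᶜ := by
      rw [← Measure.map_apply (hmeas j) hRmeas.compl, hdist j]
    rw [ae_iff]
    have : {ω | ¬ (α j ω, γ j ω) ∈ R} = (fun ω => (α j ω, γ j ω)) ⁻¹' Rᶜ := rfl
    rw [this, h1, hcompl]
  -- a.s. density events
  have hdens : ∀ᵐ ω ∂P, ∀ (q s : ℚ) (n : ℕ),
      ν₁.prod ν₂ (Set.Ioo (q : ℝ) (q + 1 / ((n : ℝ) + 1)) ×ˢ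
        Set.Ioo (s : ℝ) (s + 1 / ((n : ℝ) + 1))) ≠ 0 →
      ∃ j, (α j ω, γ j ω) ∈ Set.Ioo (q : ℝ) (q + 1 / ((n : ℝ) + 1)) ×ˢ
        Set.Ioo (s : ℝ) (s + 1 / ((n : ℝ) + 1)) := by
    rw [ae_all_iff]; intro q
    rw [ae_all_iff]; intro s
    rw [ae_all_iff]; intro n
    by_cases hz : ν₁.prod ν₂ (Set.Ioo (q : ℝ) (q + 1 / ((n : ℝ) + 1)) ×ˢ
        Set.Ioo (s : ℝ) (s + 1 / ((n : ℝ) + 1))) ≠ 0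
    · exact (hhit _ (measurableSet_Ioo.prod measurableSet_Ioo) hz).mono fun ω h _ => h
    · exact Eventually.of_forall fun ω h => absurd h hz
  filter_upwards [hmemae, hdens] with ω hmem hden
  intro φ hφ
  refine AuxRBF.det_main hx ha hg₁ hg.le (A := fun j => α j ω) (Γ := fun j => γ j ω) ?_ hφ
  rintro ⟨c, t⟩ hp
  have hpc : c ∈ Set.Icc a₁ a₂ := hp.1
  have hpt : t ∈ Set.Icc g₁ g₂ := hp.2
  rw [Metric.mem_closure_iff]
  intro ε hε
  obtain ⟨n, hn⟩ := exists_nat_gt (2 / ε)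
  set δ : ℝ := 1 / ((n : ℝ) + 1) with hδdef
  have hδpos : 0 < δ := by positivity
  have hδε : δ < ε := by
    rw [hδdef, div_lt_iff₀ (by positivity)]
    have h2 : 2 < ε * ((n : ℝ) + 1) := by
      rw [div_lt_iff₀ hε] at hn
      nlinarith
    nlinarith
  obtain ⟨q, hq1, hq2⟩ := exists_rat_btwn (show c - δ < c by linarith)
  obtain ⟨s, hs1, hs2⟩ := exists_rat_btwn (show t - δ < t by linarith)
  have hνne : ν₁.prod ν₂ (Set.Ioo (q : ℝ) (q + δ) ×ˢ Set.Ioo (s : ℝ) (s + δ)) ≠ 0 := by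
    rw [Measure.prod_prod]
    exact mul_ne_zero
      (by rw [hν₁]; exact AuxRBF.meas_Ioo_ne_zero ha hpc hq2 (by linarith))
      (by rw [hν₂]; exact AuxRBF.meas_Ioo_ne_zero hg hpt hs2 (by linarith))
  obtain ⟨j, hj⟩ := hden q s n (by rw [← hδdef]; exact hνne)
  rw [← hδdef] at hj
  refine ⟨(α j ω, γ j ω), ⟨j, rfl⟩, ?_⟩
  rw [Prod.dist_eq]
  have hj1 := hj.1
  have hj2 := hj.2
  apply max_lt
  · rw [Real.dist_eq, abs_lt]
    constructor
    · have := hj1.2; simp only at this ⊢; linarith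
    · have := hj1.1; linarith
  · rw [Real.dist_eq, abs_lt]
    constructor
    · have := hj2.2; linarith
    · have := hj2.1; linarith
end

section
/- (Explicit general solution of the homogeneous constant-coefficient linear system.) Let m be a positive natural number, A an m×m complex matrix, λ₁, …, λ_m ∈ ℂ and c₁, …, c_m ∈ ℂ^m with A·c_l = λ_l·c_l for each l, and assume c₁, …, c_m form a basis of ℂ^m. Then for any coefficients κ₁, …, κ_m ∈ ℂ, the function y(x) = Σ_{l=1}^{m} κ_l·exp(λ_l·x)·c_l is differentiable and satisfies y'(x) = A·y(x) for all x ∈ ℝ with y(0) = Σ_{l=1}^{m} κ_l·c_l; moreover, it is the unique differentiable function on ℝ satisfying this initial value problem, so every solution of y' = A·y is of this form. -/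
/-- **Explicit general solution of the homogeneous constant-coefficient linear system.** Let
`A ∈ ℂ^{m×m}`, let `(λ_l, c_l)` be eigenvalue–eigenvector pairs with `c₁,…,c_m` a basis of
`ℂ^m`. Then for any coefficients `κ`, `y(x) = Σ_l κ_l exp(λ_l x) c_l` is differentiable,
satisfies `y' = A y` with `y(0) = Σ_l κ_l c_l`, is the unique solution with that initial value,
and every solution of `y' = A y` is of this form. -/
theorem linear_system_general_solution
    (m : ℕ) (hm : 0 < m) (A : Matrix (Fin m) (Fin m) ℂ)
    (lam : Fin m → ℂ) (c : Fin m → Fin m → ℂ)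
    (heig : ∀ l : Fin m, A.mulVec (c l) = lam l • c l)
    (hindep : LinearIndependent ℂ c)
    (hspan : Submodule.span ℂ (Set.range c) = ⊤) (κ : Fin m → ℂ) :
    (∀ x : ℝ,
      HasDerivAt (fun t : ℝ => ∑ l, κ l • Complex.exp (lam l * (t : ℂ)) • c l)
        (A.mulVec (∑ l, κ l • Complex.exp (lam l * (x : ℂ)) • c l)) x) ∧
    (∑ l, κ l • Complex.exp (lam l * ((0 : ℝ) : ℂ)) • c l) = (∑ l, κ l • c l) ∧
    (∀ z : ℝ → Fin m → ℂ,
      (∀ x : ℝ, HasDerivAt z (A.mulVec (z x)) x) →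
      z 0 = (∑ l, κ l • c l) →
      ∀ x : ℝ, z x = ∑ l, κ l • Complex.exp (lam l * (x : ℂ)) • c l) ∧
    (∀ z : ℝ → Fin m → ℂ,
      (∀ x : ℝ, HasDerivAt z (A.mulVec (z x)) x) →
      ∃ κ' : Fin m → ℂ,
        ∀ x : ℝ, z x = ∑ l, κ' l • Complex.exp (lam l * (x : ℂ)) • c l) := by
  -- the explicit solution, for arbitrary coefficients
  have hderiv : ∀ (κ : Fin m → ℂ) (x : ℝ),
      HasDerivAt (fun t : ℝ => ∑ l, κ l • Complex.exp (lam l * (t : ℂ)) • c l)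
        (A.mulVec (∑ l, κ l • Complex.exp (lam l * (x : ℂ)) • c l)) x := by
    intro κ x
    have hterm : ∀ l : Fin m,
        HasDerivAt (fun t : ℝ => κ l • Complex.exp (lam l * (t : ℂ)) • c l)
          (κ l • ((lam l * Complex.exp (lam l * (x : ℂ))) • c l)) x := by
      intro l
      have h1 : HasDerivAt (fun z : ℂ => Complex.exp (lam l * z))
          (lam l * Complex.exp (lam l * x)) x := by
        simpa [mul_comm] using ((hasDerivAt_id (x : ℂ)).const_mul (lam l)).cexp
      exact ((h1.comp_ofReal).smul_const (c l)).const_smul (κ l)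
    have hsum := HasDerivAt.fun_sum (u := Finset.univ) (fun l (_ : l ∈ Finset.univ) => hterm l)
    have key : A.mulVec (∑ l, κ l • Complex.exp (lam l * (x : ℂ)) • c l)
        = ∑ l, κ l • (lam l * Complex.exp (lam l * (x : ℂ))) • c l := by
      rw [← Matrix.mulVecLin_apply, map_sum]
      refine Finset.sum_congr rfl fun l _ => ?_
      rw [map_smul, map_smul, Matrix.mulVecLin_apply, heig l, mul_smul, smul_comm]
      module
    rw [key]
    exact hsum
  -- uniqueness of solutions
  have huniq : ∀ f g : ℝ → Fin m → ℂ,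
      (∀ x : ℝ, HasDerivAt f (A.mulVec (f x)) x) →
      (∀ x : ℝ, HasDerivAt g (A.mulVec (g x)) x) →
      f 0 = g 0 → ∀ x : ℝ, f x = g x := by
    intro f g hf hg h0 x
    set K := ‖(Matrix.mulVecLin A).toContinuousLinearMap‖₊ with hK
    have hlip : ∀ t : ℝ, LipschitzWith K (fun y : Fin m → ℂ => A.mulVec y) :=
      fun _ => (Matrix.mulVecLin A).toContinuousLinearMap.lipschitz
    have hmem : x ∈ Set.Icc (-(|x| + 1)) (|x| + 1) := by
      constructor <;> [nlinarith [abs_nonneg x, neg_abs_le x]; nlinarith [le_abs_self x]]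
    have h0mem : (0 : ℝ) ∈ Set.Ioo (-(|x| + 1)) (|x| + 1) := by
      constructor <;> nlinarith [abs_nonneg x]
    exact ODE_solution_unique_of_mem_Icc (s := fun _ => Set.univ) (t₀ := 0)
      (fun t _ => (hlip t).lipschitzOnWith) h0mem
      (fun t _ => (hf t).continuousAt.continuousWithinAt)
      (fun t _ => hf t) (fun _ _ => trivial)
      (fun t _ => (hg t).continuousAt.continuousWithinAt)
      (fun t _ => hg t) (fun _ _ => trivial) h0 hmem
  refine ⟨hderiv κ, ?_, ?_, ?_⟩
  · simp
  · intro z hz hz0 x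
    refine huniq z _ hz (hderiv κ) ?_ x
    simpa using hz0
  · intro z hz
    let hb : Module.Basis (Fin m) ℂ (Fin m → ℂ) := Module.Basis.mk hindep (by rw [hspan])
    refine ⟨fun l => hb.repr (z 0) l, fun x => ?_⟩
    refine huniq z _ hz (hderiv _) ?_ x
    have h := hb.sum_repr (z 0)
    simp only [hb, Module.Basis.mk_apply] at h
    simpa [hb] using h.symm
end
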